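/- arXiv:1304.1641 — 8 statements merged into one kernel-verified Lean document; each statement's English description precedes it below -/
import Mathlib

section
/- Let q be a formal parameter and let E(x) = ∑_{n≥0} (-x)^n / ((1-q)(1-q^2)···(1-q^n)) be the quantum exponential formal power series. If X and Y are elements of an associative algebra over the field of rational functions in q satisfying Y·X = q·X·Y, then E(X)·E(Y) = E(X+Y), where E(X) denotes the formal substitution of X into the series (valid e.g. when X, Y are nilpotent or in a suitable completion). -/
/-- Coefficients of the quantum exponential series
`E(x) = ∑ (-x)^n / ((1-q)⋯(1-q^n))` with `q = RatFunc.X`. -/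
noncomputable def qcoef (n : ℕ) : RatFunc ℚ :=
  (-1 : RatFunc ℚ) ^ n / ∏ k ∈ Finset.range n, (1 - (RatFunc.X : RatFunc ℚ) ^ (k + 1))

/-- The quantum exponential of an element of a topological algebra over `ℚ(q)`. -/
noncomputable def qexp {A : Type*} [Ring A] [Algebra (RatFunc ℚ) A] [TopologicalSpace A]
    (x : A) : A :=
  ∑' n : ℕ, qcoef n • x ^ n

open Finset


noncomputable def qd (n : ℕ) : RatFunc ℚ :=
  ∏ k ∈ Finset.range n, (1 - (RatFunc.X : RatFunc ℚ) ^ (k + 1))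

lemma one_sub_X_pow_ne_zero (m : ℕ) : (1 - (RatFunc.X : RatFunc ℚ) ^ (m + 1)) ≠ 0 := by
  intro h
  have h1 : ((algebraMap (Polynomial ℚ) (RatFunc ℚ)) (1 - Polynomial.X ^ (m + 1))) =
      (algebraMap (Polynomial ℚ) (RatFunc ℚ)) 0 := by
    simp [map_sub, map_pow, RatFunc.algebraMap_X, h]
  have h2 := RatFunc.algebraMap_injective ℚ h1
  have h3 : (1 - Polynomial.X ^ (m + 1) : Polynomial ℚ).eval 0 = 0 := by rw [h2]; simp
  simp [Polynomial.eval_pow] at h3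

lemma qd_ne_zero (n : ℕ) : qd n ≠ 0 := by
  unfold qd
  rw [Finset.prod_ne_zero_iff]
  exact fun k _ => one_sub_X_pow_ne_zero k

lemma qd_succ (n : ℕ) : qd (n + 1) = qd n * (1 - (RatFunc.X : RatFunc ℚ) ^ (n + 1)) :=
  Finset.prod_range_succ _ n

noncomputable def qb (n k : ℕ) : RatFunc ℚ := qd n / (qd k * qd (n - k))

lemma qb_zero (n : ℕ) : qb n 0 = 1 := by
  unfold qb
  have : qd 0 = 1 := by simp [qd]
  rw [Nat.sub_zero, this, one_mul, div_self (qd_ne_zero n)]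

lemma qb_self (n : ℕ) : qb n n = 1 := by
  unfold qb
  have : qd 0 = 1 := by simp [qd]
  rw [Nat.sub_self, this, mul_one, div_self (qd_ne_zero n)]

lemma qb_pascal (k m : ℕ) :
    qb (k + m + 2) (k + 1) = qb (k + m + 1) k +
      (RatFunc.X : RatFunc ℚ) ^ (k + 1) * qb (k + m + 1) (k + 1) := by
  unfold qb
  have e1 : k + m + 2 - (k + 1) = m + 1 := by omega
  have e2 : k + m + 1 - k = m + 1 := by omega
  have e3 : k + m + 1 - (k + 1) = m := by omega
  rw [e1, e2, e3, qd_succ (k + m + 1), qd_succ k, qd_succ m]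
  have h1 := qd_ne_zero k
  have h2 := qd_ne_zero m
  have h3 := qd_ne_zero (k + m + 1)
  have h4 := one_sub_X_pow_ne_zero k
  have h5 := one_sub_X_pow_ne_zero m
  have h6 := one_sub_X_pow_ne_zero (k + m + 1)
  field_simp
  ring

section Alg
variable {A : Type*} [Ring A] [Algebra (RatFunc ℚ) A] (X Y : A)
  (hq : Y * X = (RatFunc.X : RatFunc ℚ) • (X * Y))

include hq in
lemma Y_mul_X_pow (k : ℕ) : Y * X ^ k = ((RatFunc.X : RatFunc ℚ) ^ k) • (X ^ k * Y) := by
  induction k with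
  | zero => simp
  | succ k ih =>
    have : Y * X ^ (k + 1) = (Y * X) * X ^ k := by rw [mul_assoc, ← pow_succ']
    rw [this, hq, smul_mul_assoc, mul_assoc, ih, mul_smul_comm, smul_smul]
    congr 1
    · exact (pow_succ' _ _).symm
    · rw [← mul_assoc, ← pow_succ']

include hq in
lemma q_add_pow (n : ℕ) :
    (X + Y) ^ n = ∑ k ∈ range (n + 1), qb n k • (X ^ k * Y ^ (n - k)) := by
  induction n with
  | zero => simp [qb_zero]
  | succ n ih =>
    have expand : (X + Y) ^ (n + 1) = X * (X + Y) ^ n + Y * (X + Y) ^ n := by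
      rw [pow_succ', add_mul]
    rw [expand, ih, Finset.mul_sum, Finset.mul_sum]
    have hX : ∀ k ∈ range (n + 1),
        X * (qb n k • (X ^ k * Y ^ (n - k))) = qb n k • (X ^ (k + 1) * Y ^ (n + 1 - (k + 1))) := by
      intro k hk
      rw [mul_smul_comm, ← mul_assoc, ← pow_succ', Nat.succ_sub_succ]
    have hY : ∀ k ∈ range (n + 1),
        Y * (qb n k • (X ^ k * Y ^ (n - k))) =
          ((RatFunc.X : RatFunc ℚ) ^ k * qb n k) • (X ^ k * Y ^ (n + 1 - k)) := by
      intro k hk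
      simp only [Finset.mem_range] at hk
      have e : n + 1 - k = (n - k) + 1 := by omega
      rw [mul_smul_comm, ← mul_assoc, Y_mul_X_pow X Y hq k, smul_mul_assoc, smul_smul,
        mul_assoc, e, pow_succ', mul_comm (qb n k)]
    rw [Finset.sum_congr rfl hX, Finset.sum_congr rfl hY]
    -- target sum: split off k = 0 via sum_range_succ'
    rw [Finset.sum_range_succ' (fun k => qb (n+1) k • (X ^ k * Y ^ (n + 1 - k))) (n + 1)]
    -- Y-side: split off k = 0
    rw [Finset.sum_range_succ' (fun k => ((RatFunc.X : RatFunc ℚ) ^ k * qb n k) •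
      (X ^ k * Y ^ (n + 1 - k))) n]
    -- X-side shifted sum has index k ∈ range (n+1) giving term at k+1; split off last (k = n)
    rw [Finset.sum_range_succ (fun k => qb n k • (X ^ (k + 1) * Y ^ (n + 1 - (k + 1)))) n]
    rw [Finset.sum_range_succ (fun k => qb (n+1) (k+1) • (X ^ (k+1) * Y ^ (n + 1 - (k+1)))) n]
    simp only [pow_zero, one_mul, qb_zero, qb_self, Nat.sub_self]
    have key : ∀ k ∈ range n,
        qb (n+1) (k+1) • (X ^ (k+1) * Y ^ (n + 1 - (k+1))) =
          qb n k • (X ^ (k + 1) * Y ^ (n + 1 - (k + 1))) +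
          ((RatFunc.X : RatFunc ℚ) ^ (k+1) * qb n (k+1)) • (X ^ (k+1) * Y ^ (n + 1 - (k+1))) := by
      intro k hk
      simp only [Finset.mem_range] at hk
      obtain ⟨m, rfl⟩ : ∃ m, n = k + m + 1 := ⟨n - k - 1, by omega⟩
      rw [← add_smul, qb_pascal k m]
    rw [Finset.sum_congr rfl key, Finset.sum_add_distrib]
    abel
end Alg

lemma qcoef_eq (n : ℕ) : qcoef n = (-1 : RatFunc ℚ) ^ n / qd n := rfl

lemma qcoef_mul_qb (k n : ℕ) (h : k ≤ n) :
    qcoef n * qb n k = qcoef k * qcoef (n - k) := by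
  have e : ((-1 : RatFunc ℚ)) ^ k * (-1) ^ (n - k) = (-1) ^ n := by
    rw [← pow_add, Nat.add_sub_cancel' h]
  rw [qcoef_eq, qcoef_eq, qcoef_eq]
  unfold qb
  rw [div_mul_div_comm, div_mul_div_comm, e]
  have h1 := qd_ne_zero k
  have h2 := qd_ne_zero n
  have h3 := qd_ne_zero (n - k)
  field_simp

theorem qexp_mul_qexp_aux {A : Type*} [Ring A] [Algebra (RatFunc ℚ) A]
    [TopologicalSpace A] [T2Space A] (X Y : A)
    (hq : Y * X = (RatFunc.X : RatFunc ℚ) • (X * Y))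
    (hX : IsNilpotent X) (hY : IsNilpotent Y) :
    (∑' n : ℕ, qcoef n • X ^ n) * (∑' n : ℕ, qcoef n • Y ^ n)
      = ∑' n : ℕ, qcoef n • (X + Y) ^ n := by
  obtain ⟨N, hN⟩ := hX
  obtain ⟨M, hM⟩ := hY
  set K := N + M with hK
  have hXz : ∀ n, N ≤ n → X ^ n = 0 := fun n h => pow_eq_zero_of_le h hN
  have hYz : ∀ n, M ≤ n → Y ^ n = 0 := fun n h => pow_eq_zero_of_le h hM
  have hXYz : ∀ n, K ≤ n → (X + Y) ^ n = 0 := by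
    intro n h
    rw [q_add_pow X Y hq n]
    apply Finset.sum_eq_zero
    intro k hk
    simp only [Finset.mem_range] at hk
    by_cases hkN : N ≤ k
    · rw [hXz k hkN, zero_mul, smul_zero]
    · rw [hYz (n - k) (by omega), mul_zero, smul_zero]
  have eqX : (∑' n : ℕ, qcoef n • X ^ n) = ∑ n ∈ range K, qcoef n • X ^ n := by
    apply tsum_eq_sum
    intro n hn
    simp only [Finset.mem_range, not_lt] at hn
    rw [hXz n (by omega), smul_zero]
  have eqY : (∑' n : ℕ, qcoef n • Y ^ n) = ∑ n ∈ range K, qcoef n • Y ^ n := by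
    apply tsum_eq_sum
    intro n hn
    simp only [Finset.mem_range, not_lt] at hn
    rw [hYz n (by omega), smul_zero]
  have eqXY : (∑' n : ℕ, qcoef n • (X + Y) ^ n) = ∑ n ∈ range K, qcoef n • (X + Y) ^ n := by
    apply tsum_eq_sum
    intro n hn
    simp only [Finset.mem_range, not_lt] at hn
    rw [hXYz n hn, smul_zero]
  rw [eqX, eqY, eqXY]
  set G : ℕ × ℕ → A := fun p => (qcoef p.1 * qcoef p.2) • (X ^ p.1 * Y ^ p.2) with hG
  have lhs_eq : (∑ n ∈ range K, qcoef n • X ^ n) * (∑ n ∈ range K, qcoef n • Y ^ n)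
      = ∑ p ∈ range K ×ˢ range K, G p := by
    rw [Finset.sum_mul_sum, Finset.sum_product]
    exact Finset.sum_congr rfl fun i _ => Finset.sum_congr rfl fun j _ =>
      (smul_mul_smul_comm _ _ _ _)
  have rhs_eq : (∑ n ∈ range K, qcoef n • (X + Y) ^ n)
      = ∑ n ∈ range K, ∑ p ∈ Finset.HasAntidiagonal.antidiagonal n, G p := by
    refine Finset.sum_congr rfl fun n _ => ?_
    rw [q_add_pow X Y hq n, Finset.smul_sum,
      Finset.Nat.sum_antidiagonal_eq_sum_range_succ_mk (f := G)]
    refine Finset.sum_congr rfl fun k hk => ?_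
    simp only [Finset.mem_range] at hk
    rw [hG]
    simp only [smul_smul]
    rw [qcoef_mul_qb k n (by omega)]
  rw [lhs_eq, rhs_eq]
  have hdisj : (↑(range K) : Set ℕ).PairwiseDisjoint Finset.HasAntidiagonal.antidiagonal := by
    intro a _ b _ hab
    simp only [Function.onFun, Finset.disjoint_left]
    intro p hpa hpb
    simp only [Finset.HasAntidiagonal.mem_antidiagonal] at hpa hpb
    exact hab (hpa ▸ hpb.symm ▸ rfl)
  rw [← Finset.sum_biUnion hdisj]
  refine (Finset.sum_subset ?_ ?_).symm
  · intro p hp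
    simp only [Finset.mem_biUnion, Finset.HasAntidiagonal.mem_antidiagonal] at hp
    obtain ⟨n, hn, hpn⟩ := hp
    simp only [Finset.mem_range] at hn
    simp only [Finset.mem_product, Finset.mem_range]
    omega
  · intro p hp hnp
    simp only [Finset.mem_product, Finset.mem_range] at hp
    have hge : K ≤ p.1 + p.2 := by
      by_contra hlt
      push_neg at hlt
      exact hnp (Finset.mem_biUnion.mpr ⟨p.1 + p.2, Finset.mem_range.mpr hlt,
        Finset.HasAntidiagonal.mem_antidiagonal.mpr rfl⟩)
    show (qcoef p.1 * qcoef p.2) • (X ^ p.1 * Y ^ p.2) = 0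
    by_cases h1 : N ≤ p.1
    · rw [hXz p.1 h1, zero_mul, smul_zero]
    · rw [hYz p.2 (by omega), mul_zero, smul_zero]

/-- Schützenberger's identity: for `q`-commuting (nilpotent) `X`, `Y`,
`E(X)·E(Y) = E(X+Y)`. -/
theorem qexp_mul_qexp_of_qcommute {A : Type*} [Ring A] [Algebra (RatFunc ℚ) A]
    [TopologicalSpace A] [T2Space A] (X Y : A)
    (hq : Y * X = (RatFunc.X : RatFunc ℚ) • (X * Y))
    (hX : IsNilpotent X) (hY : IsNilpotent Y) :
    qexp X * qexp Y = qexp (X + Y) := by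
  unfold qexp
  exact qexp_mul_qexp_aux X Y hq hX hY
end

section
/- Let X and Y be q-commuting elements (YX = qXY) of an associative algebra over the rational function field in q, and let E be the quantum exponential series E(x) = ∑_{n≥0} (-x)^n/((1-q)···(1-q^n)). Then the pentagon identity holds: E(X)·E(XY)·E(Y) = E(Y)·E(X). -/
open Finset

noncomputable def qq : RatFunc ℚ := RatFunc.X
noncomputable def dd (n : ℕ) : RatFunc ℚ := ∏ k ∈ Finset.range n, (qq ^ (k+1) - 1)

lemma factor_ne (k : ℕ) : qq ^ (k+1) - 1 ≠ 0 := by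
  have : qq ^ (k+1) - 1 = algebraMap (Polynomial ℚ) (RatFunc ℚ) (Polynomial.X ^ (k+1) - Polynomial.C 1) := by
    simp [qq, map_sub, map_pow, RatFunc.algebraMap_X, map_one]
  rw [this]
  exact RatFunc.algebraMap_ne_zero (Polynomial.X_pow_sub_C_ne_zero (Nat.succ_pos k) 1)

lemma dd_ne (n : ℕ) : dd n ≠ 0 := by
  unfold dd
  exact Finset.prod_ne_zero_iff.mpr fun k _ => factor_ne k

lemma dd_zero : dd 0 = 1 := Finset.prod_range_zero _

lemma dd_succ (n : ℕ) : dd (n+1) = dd n * (qq ^ (n+1) - 1) := Finset.prod_range_succ _ _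

lemma qcoef_eq_s1 (n : ℕ) : qcoef n = (dd n)⁻¹ := by
  unfold qcoef dd
  rw [show (∏ k ∈ Finset.range n, (qq ^ (k+1) - 1)) = ∏ k ∈ Finset.range n, ((-1) * (1 - (RatFunc.X:RatFunc ℚ) ^ (k+1))) by
    apply Finset.prod_congr rfl; intro k _; simp [qq]]
  rw [Finset.prod_mul_distrib, Finset.prod_const, Finset.card_range]
  rw [mul_inv, ← inv_pow, inv_neg, inv_one, div_eq_mul_inv]

noncomputable def tt (a b j : ℕ) : RatFunc ℚ :=
  qq ^ (j.choose 2) * ((dd (a-j))⁻¹ * (dd j)⁻¹ * (dd (b-j))⁻¹)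

noncomputable def SS (a b : ℕ) : RatFunc ℚ := ∑ j ∈ Finset.range (min a b + 1), tt a b j

lemma choose_succ_two (i : ℕ) : (i+1).choose 2 = i.choose 2 + i := by
  rw [Nat.choose_succ_succ, Nat.choose_one_right, Nat.add_comm]

lemma termwise (a b j : ℕ) (hj : j ≤ min (a+1) (b+1)) :
    (qq^(b+1) - 1) * tt (a+1) (b+1) j
      = (if j ≤ b then tt (a+1) b j else 0) + qq^b * (if j = 0 then 0 else tt a b (j-1)) := by
  rcases j with _ | i
  · rw [if_pos (Nat.zero_le b), if_pos rfl, mul_zero, add_zero]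
    unfold tt
    rw [show (0:ℕ).choose 2 = 0 from rfl]
    simp only [Nat.sub_zero, pow_zero, one_mul]
    rw [dd_succ b, mul_inv, dd_zero, inv_one]
    have hEb : (qq^(b+1)-1) * (qq^(b+1)-1)⁻¹ = 1 := mul_inv_cancel₀ (factor_ne b)
    linear_combination ((dd (a+1))⁻¹ * (dd b)⁻¹) * hEb
  · rcases le_or_gt (i+1) b with h1 | h1
    · rw [if_pos h1, if_neg (Nat.succ_ne_zero i)]
      unfold tt
      have e1 : a+1-(i+1) = a-i := by omega
      have e2 : b+1-(i+1) = (b-(i+1))+1 := by omega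
      have e3 : b-i = (b-(i+1))+1 := by omega
      have e4 : i+1-1 = i := by omega
      rw [e4, e1, e2, e3, choose_succ_two, dd_succ (b-(i+1)), dd_succ i]
      rw [show qq^(b+1) = qq^((b-(i+1))+1) * qq^(i+1) from by rw [← pow_add]; congr 1; omega]
      rw [show qq^b = qq^((b-(i+1))+1) * qq^i from by rw [← pow_add]; congr 1; omega]
      rw [pow_add qq (i.choose 2) i, mul_inv, mul_inv]
      have hE : (qq^(i+1)-1) * (qq^(i+1)-1)⁻¹ = 1 := mul_inv_cancel₀ (factor_ne i)
      have hD : (qq^((b-(i+1))+1)-1) * (qq^((b-(i+1))+1)-1)⁻¹ = 1 := mul_inv_cancel₀ (factor_ne (b-(i+1)))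
      linear_combination (qq^((b-(i+1))+1) * qq^(i.choose 2) * qq^i * (dd (a-i))⁻¹ * (dd i)⁻¹ * (dd (b-(i+1)))⁻¹ * (qq^((b-(i+1))+1) - 1)⁻¹) * hE + (qq^(i.choose 2) * qq^i * (dd (a-i))⁻¹ * (dd i)⁻¹ * (dd (b-(i+1)))⁻¹ * (qq^(i+1)-1)⁻¹) * hD
    · have hib : i = b := by omega
      subst hib
      rw [if_neg (by omega), if_neg (Nat.succ_ne_zero i), zero_add]
      unfold tt
      have e1 : a+1-(i+1) = a-i := by omega
      have e2 : i+1-(i+1) = 0 := by omega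
      have e3 : i-i = 0 := by omega
      have e4 : i+1-1 = i := by omega
      rw [e4, e1, e2, e3, choose_succ_two, dd_succ i, dd_zero, inv_one]
      rw [pow_add qq (i.choose 2) i, mul_inv]
      have hE : (qq^(i+1)-1) * (qq^(i+1)-1)⁻¹ = 1 := mul_inv_cancel₀ (factor_ne i)
      linear_combination (qq^(i.choose 2) * qq^i * (dd (a-i))⁻¹ * (dd i)⁻¹) * hE

lemma SS_rec (a b : ℕ) : (qq^(b+1) - 1) * SS (a+1) (b+1) = SS (a+1) b + qq^b * SS a b := by
  unfold SS
  rw [Finset.mul_sum]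
  rw [Finset.sum_congr rfl (fun j hj => termwise a b j (by simpa using Nat.lt_succ_iff.mp (Finset.mem_range.mp hj)))]
  rw [Finset.sum_add_distrib]
  congr 1
  · rw [← Finset.sum_subset (Finset.range_subset_range.mpr (by omega : min (a+1) b + 1 ≤ min (a+1) (b+1) + 1))
      (fun x hx hxs => if_neg (by
        simp only [Finset.mem_range] at hx hxs; omega))]
    apply Finset.sum_congr rfl
    intro j hj
    rw [if_pos (by simp only [Finset.mem_range] at hj; omega)]
  · rw [← Finset.mul_sum]
    congr 1
    have : min (a+1) (b+1) = min a b + 1 := by omega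
    rw [this, Finset.sum_range_succ']
    simp

lemma SS_eq (b a : ℕ) : SS a b = qq^(a*b) * ((dd a)⁻¹ * (dd b)⁻¹) := by
  induction b generalizing a with
  | zero =>
      unfold SS tt
      simp [dd_zero]
  | succ b ih =>
      rcases a with _ | a'
      · unfold SS tt
        simp [dd_zero]
      · have h := SS_rec a' b
        rw [ih (a'+1), ih a'] at h
        apply mul_left_cancel₀ (factor_ne b)
        rw [h]
        rw [dd_succ b, dd_succ a', mul_inv, mul_inv]
        have e1 : (a'+1)*(b+1) = a'*b + b + (a'+1) := by ring
        have e2 : (a'+1)*b = a'*b + b := by ring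
        rw [e1, e2, pow_add qq (a'*b+b) (a'+1), pow_add qq (a'*b) b]
        have hEa : (qq^(a'+1)-1) * (qq^(a'+1)-1)⁻¹ = 1 := mul_inv_cancel₀ (factor_ne a')
        have hEb : (qq^(b+1)-1) * (qq^(b+1)-1)⁻¹ = 1 := mul_inv_cancel₀ (factor_ne b)
        linear_combination (-(qq^(a'*b)*qq^b*qq^(a'+1)*(dd a')⁻¹*(dd b)⁻¹*(qq^(a'+1)-1)⁻¹)) * hEb + (-(qq^(a'*b)*qq^b*(dd a')⁻¹*(dd b)⁻¹)) * hEa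

section CommLemmas
variable {A : Type*} [Ring A] [Algebra (RatFunc ℚ) A] (X Y : A)
  (hq : Y * X = qq • (X * Y))

include hq

lemma qcomm_pow (i : ℕ) : Y * X ^ i = (qq ^ i) • (X ^ i * Y) := by
  induction i with
  | zero => simp
  | succ n ih =>
      rw [pow_succ, ← mul_assoc, ih, smul_mul_assoc, mul_assoc, hq, mul_smul_comm, smul_smul,
        ← mul_assoc, ← pow_succ, ← pow_succ]

lemma qcomm_pow_pow (k i : ℕ) : Y ^ k * X ^ i = (qq ^ (k*i)) • (X ^ i * Y ^ k) := by
  induction k with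
  | zero => simp
  | succ n ih =>
      rw [pow_succ, mul_assoc, qcomm_pow X Y hq i, mul_smul_comm, ← mul_assoc, ih,
        smul_mul_assoc, smul_smul, mul_assoc, ← pow_succ, ← pow_add,
        show i + n*i = (n+1)*i from by ring]

lemma qmul_pow (n : ℕ) : (X * Y) ^ n = (qq ^ (n.choose 2)) • (X ^ n * Y ^ n) := by
  induction n with
  | zero => simp
  | succ n ih =>
      rw [pow_succ', ih, mul_smul_comm]
      rw [mul_assoc X Y (X^n * Y^n), ← mul_assoc Y (X^n) (Y^n), qcomm_pow X Y hq n,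
        smul_mul_assoc, mul_smul_comm, smul_smul, mul_assoc (X^n) Y (Y^n), ← pow_succ',
        ← mul_assoc X (X^n) (Y^(n+1)), ← pow_succ', ← pow_add]
      congr 1
      rw [Nat.choose_succ_succ, Nat.choose_one_right, Nat.add_comm]

end CommLemmas

/-- The pentagon identity: for `q`-commuting (nilpotent) `X`, `Y`,
`E(X)·E(XY)·E(Y) = E(Y)·E(X)`. -/
theorem qexp_pentagon {A : Type*} [Ring A] [Algebra (RatFunc ℚ) A]
    [TopologicalSpace A] [T2Space A] (X Y : A)
    (hq : Y * X = (RatFunc.X : RatFunc ℚ) • (X * Y))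
    (hX : IsNilpotent X) (hY : IsNilpotent Y) :
    qexp X * qexp (X * Y) * qexp Y = qexp Y * qexp X := by
  classical
  have hq' : Y * X = qq • (X * Y) := hq
  obtain ⟨n1, h1⟩ := hX
  obtain ⟨n2, h2⟩ := hY
  set N := n1 + n2 + 1 with hN
  have hXn : ∀ n, N ≤ n → X ^ n = 0 := by
    intro n hn
    rw [show n = n1 + (n - n1) from by omega, pow_add, h1, zero_mul]
  have hYn : ∀ n, N ≤ n → Y ^ n = 0 := by
    intro n hn
    rw [show n = n2 + (n - n2) from by omega, pow_add, h2, zero_mul]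
  have hXYn : ∀ n, N ≤ n → (X * Y) ^ n = 0 := by
    intro n hn
    rw [qmul_pow X Y hq' n, hXn n hn, zero_mul, smul_zero]
  have repr : ∀ x : A, (∀ n, N ≤ n → x ^ n = 0) →
      qexp x = ∑ n ∈ Finset.range N, qcoef n • x ^ n := by
    intro x hx
    exact tsum_eq_sum (fun n hn => by rw [hx n (by simpa using hn), smul_zero])
  rw [repr X hXn, repr Y hYn, repr (X*Y) hXYn]
  -- expand the left-hand side
  have expandL : (∑ i ∈ range N, qcoef i • X ^ i) * (∑ j ∈ range N, qcoef j • (X*Y) ^ j)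
      * (∑ k ∈ range N, qcoef k • Y ^ k)
      = ∑ i ∈ range N, ∑ j ∈ range N, ∑ k ∈ range N,
          (qcoef i * qcoef j * qcoef k * qq ^ (j.choose 2)) • (X ^ (i+j) * Y ^ (j+k)) := by
    rw [Finset.sum_mul_sum, Finset.sum_mul]
    refine Finset.sum_congr rfl fun i _ => ?_
    rw [Finset.sum_mul]
    refine Finset.sum_congr rfl fun j _ => ?_
    rw [Finset.mul_sum]
    refine Finset.sum_congr rfl fun k _ => ?_
    rw [qmul_pow X Y hq' j]
    simp only [smul_mul_assoc, mul_smul_comm, smul_smul]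
    rw [pow_add, pow_add]
    congr 1
    · ring
    · simp [mul_assoc]
  have expandR : (∑ b ∈ range N, qcoef b • Y ^ b) * (∑ a ∈ range N, qcoef a • X ^ a)
      = ∑ a ∈ range N, ∑ b ∈ range N,
          (qq ^ (a*b) * ((dd a)⁻¹ * (dd b)⁻¹)) • (X ^ a * Y ^ b) := by
    rw [Finset.sum_mul_sum, Finset.sum_comm]
    refine Finset.sum_congr rfl fun a _ => Finset.sum_congr rfl fun b _ => ?_
    simp only [smul_mul_assoc, mul_smul_comm, smul_smul]
    rw [qcomm_pow_pow X Y hq' b a, smul_smul]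
    congr 1
    rw [qcoef_eq_s1, qcoef_eq_s1, Nat.mul_comm b a]
    ring
  rw [expandL, expandR]
  -- the key combinatorial reindexing
  have key : (∑ i ∈ range N, ∑ j ∈ range N, ∑ k ∈ range N,
        (qcoef i * qcoef j * qcoef k * qq ^ (j.choose 2)) • (X ^ (i+j) * Y ^ (j+k)))
      = ∑ a ∈ range N, ∑ b ∈ range N, ∑ j ∈ range (min a b + 1),
          (qcoef (a-j) * qcoef j * qcoef (b-j) * qq ^ (j.choose 2)) • (X ^ a * Y ^ b) := by
    have hL : (∑ σ ∈ ((range N).sigma fun _ => (range N).sigma fun _ => range N),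
            (qcoef σ.1 * qcoef σ.2.1 * qcoef σ.2.2 * qq ^ (σ.2.1.choose 2))
              • (X ^ (σ.1+σ.2.1) * Y ^ (σ.2.1+σ.2.2)))
        = ∑ i ∈ range N, ∑ j ∈ range N, ∑ k ∈ range N,
          (qcoef i * qcoef j * qcoef k * qq ^ (j.choose 2)) • (X ^ (i+j) * Y ^ (j+k)) := by
      rw [Finset.sum_sigma]
      refine Finset.sum_congr rfl fun i _ => ?_
      rw [Finset.sum_sigma]
    have hR : (∑ τ ∈ ((range N).sigma fun _ => range N).sigma
              (fun p => range (min p.1 p.2 + 1)),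
            (qcoef (τ.1.1 - τ.2) * qcoef τ.2 * qcoef (τ.1.2 - τ.2) * qq ^ (τ.2.choose 2))
              • (X ^ τ.1.1 * Y ^ τ.1.2))
        = ∑ a ∈ range N, ∑ b ∈ range N, ∑ j ∈ range (min a b + 1),
          (qcoef (a-j) * qcoef j * qcoef (b-j) * qq ^ (j.choose 2)) • (X ^ a * Y ^ b) := by
      rw [Finset.sum_sigma, Finset.sum_sigma]
    rw [← hL, ← hR]
    rw [← Finset.sum_filter_of_ne
      (p := fun σ : (_ : ℕ) × (_ : ℕ) × ℕ => σ.1 + σ.2.1 < N ∧ σ.2.1 + σ.2.2 < N)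
      (fun σ hσ hne => by
        constructor
        · by_contra hc
          exact hne (by rw [hXn _ (by omega), zero_mul, smul_zero])
        · by_contra hc
          exact hne (by rw [hYn _ (by omega), mul_zero, smul_zero]))]
    refine Finset.sum_nbij'
      (fun σ => ⟨⟨σ.1 + σ.2.1, σ.2.1 + σ.2.2⟩, σ.2.1⟩)
      (fun τ => ⟨τ.1.1 - τ.2, ⟨τ.2, τ.1.2 - τ.2⟩⟩) ?_ ?_ ?_ ?_ ?_
    · rintro ⟨i, j, k⟩ h
      rw [Finset.mem_filter] at h
      obtain ⟨hs, hp⟩ := h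
      simp only [Finset.mem_sigma, Finset.mem_range] at hs ⊢
      try dsimp only at hs hp ⊢
      omega
    · rintro ⟨⟨a, b⟩, j⟩ h
      simp only [Finset.mem_sigma, Finset.mem_range] at h
      rw [Finset.mem_filter]
      refine ⟨?_, ?_, ?_⟩
      · simp only [Finset.mem_sigma, Finset.mem_range]
        try dsimp only
        omega
      · dsimp only
        omega
      · dsimp only
        omega
    · rintro ⟨i, j, k⟩ h
      simp only [Nat.add_sub_cancel, Nat.add_sub_cancel_left]
    · rintro ⟨⟨a, b⟩, j⟩ h
      simp only [Finset.mem_sigma, Finset.mem_range] at h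
      have e1 : a - j + j = a := by omega
      have e2 : j + (b - j) = b := by omega
      simp only [e1, e2]
    · rintro ⟨i, j, k⟩ h
      simp only [Nat.add_sub_cancel, Nat.add_sub_cancel_left]
  rw [key]
  refine Finset.sum_congr rfl fun a _ => Finset.sum_congr rfl fun b _ => ?_
  rw [← Finset.sum_smul]
  congr 1
  rw [← SS_eq b a]
  unfold SS tt
  refine Finset.sum_congr rfl fun j _ => ?_
  rw [qcoef_eq_s1, qcoef_eq_s1, qcoef_eq_s1]
  ring
end

section
/- In the group B(2,N) with generators R_{ab} for 1 ≤ a < b ≤ N, where R_{ab} and R_{a'b'} commute if {a,b} ∩ {a',b'} = ∅ and R_{ab}·R_{ac}·R_{bc} = R_{bc}·R_{ac}·R_{ab} for all a < b < c (Yang–Baxter relations), the lexicographically ordered product W(2,N) = ∏→_{1≤a<b≤N} R_{ab} equals the reversely ordered product ∏←_{1≤a<b≤N} R_{ab}. -/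
/-- The list of pairs `(a,b)` with `1 ≤ a < b ≤ N`, in lexicographic order. -/
def pairList (N : ℕ) : List (ℕ × ℕ) :=
  (((List.range (N + 1)).flatMap fun a => (List.range (N + 1)).map fun b => (a, b)).filter
    fun p => decide (1 ≤ p.1 ∧ p.1 < p.2))

namespace B2Aux

/-- The row `(a, s), (a, s+1), …, (a, s+len-1)`. -/
def rowL (a s len : ℕ) : List (ℕ × ℕ) := (List.range' s len).map fun c => (a, c)

/-- The lexicographically ordered list of pairs `(i,j)` with `m ≤ i < j ≤ m + k`. -/
def WL (m k : ℕ) : List (ℕ × ℕ) :=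
  (List.range' m k).flatMap fun a => (List.range' (a + 1) (m + k - a)).map fun c => (a, c)

lemma rowL_succ (a s len : ℕ) : rowL a s (len + 1) = (a, s) :: rowL a (s + 1) len := by
  simp [rowL, List.range'_succ]

lemma rowL_concat (a s len : ℕ) : rowL a s (len + 1) = rowL a s len ++ [(a, s + len)] := by
  simp [rowL, List.range'_1_concat]

lemma WL_succ (m k : ℕ) : WL m (k + 1) = rowL m (m + 1) (k + 1) ++ WL (m + 1) k := by
  have h : ∀ a, m + (k + 1) - a = m + 1 + k - a := fun a => by omega
  simp only [WL, List.range'_succ, List.flatMap_cons, rowL, h]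
  rw [show m + 1 + k - m = k + 1 from by omega, List.range'_succ]

lemma mem_WL {p : ℕ × ℕ} {m k : ℕ} (h : p ∈ WL m k) :
    m ≤ p.1 ∧ p.1 < p.2 ∧ p.2 ≤ m + k := by
  simp only [WL, List.mem_flatMap, List.mem_map, List.mem_range'_1] at h
  obtain ⟨a, ha, c, hc, rfl⟩ := h
  simp only
  omega

variable {G : Type*} [Group G] (R : ℕ → ℕ → G)

/-- Product of the generators along a list of pairs. -/
def pr (l : List (ℕ × ℕ)) : G := (l.map fun p => R p.1 p.2).prod

lemma pr_nil : pr R ([] : List (ℕ × ℕ)) = 1 := rfl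

lemma pr_cons (x : ℕ × ℕ) (l : List (ℕ × ℕ)) : pr R (x :: l) = R x.1 x.2 * pr R l := by
  simp [pr]

lemma pr_append (l₁ l₂ : List (ℕ × ℕ)) : pr R (l₁ ++ l₂) = pr R l₁ * pr R l₂ := by
  simp [pr]

lemma pr_singleton (x : ℕ × ℕ) : pr R [x] = R x.1 x.2 := by
  simp [pr]

lemma commute_pr (x : G) (l : List (ℕ × ℕ)) (h : ∀ p ∈ l, Commute x (R p.1 p.2)) :
    Commute x (pr R l) := by
  apply Commute.list_prod_right
  intro y hy
  simp only [List.mem_map] at hy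
  obtain ⟨p, hp, rfl⟩ := hy
  exact h p hp

variable (N : ℕ)
variable (hcomm : ∀ a b a' b' : ℕ, 1 ≤ a → a < b → b ≤ N → 1 ≤ a' → a' < b' → b' ≤ N →
      ({a, b} : Finset ℕ) ∩ {a', b'} = ∅ → R a b * R a' b' = R a' b' * R a b)
variable (hYB : ∀ a b c : ℕ, 1 ≤ a → a < b → b < c → c ≤ N →
      R a b * R a c * R b c = R b c * R a c * R a b)

section
include hcomm

lemma commG {a b a' b' : ℕ} (h1 : 1 ≤ a) (h2 : a < b) (h3 : b ≤ N)
    (h4 : 1 ≤ a') (h5 : a' < b') (h6 : b' ≤ N)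
    (hd : a ≠ a' ∧ a ≠ b' ∧ b ≠ a' ∧ b ≠ b') : Commute (R a b) (R a' b') := by
  have : ({a, b} : Finset ℕ) ∩ {a', b'} = ∅ := by
    ext x
    simp only [Finset.mem_inter, Finset.mem_insert, Finset.mem_singleton,
      Finset.notMem_empty, iff_false]
    omega
  exact hcomm a b a' b' h1 h2 h3 h4 h5 h6 this

/-- `R a b` commutes with any product of generators whose indices are all `> b`. -/
lemma commute_pr_high {a b : ℕ} (h1 : 1 ≤ a) (h2 : a < b) (h3 : b ≤ N)
    (l : List (ℕ × ℕ)) (hl : ∀ p ∈ l, b < p.1 ∧ p.1 < p.2 ∧ p.2 ≤ N) :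
    Commute (R a b) (pr R l) := by
  apply commute_pr
  intro p hp
  obtain ⟨hb1, hb2, hb3⟩ := hl p hp
  exact commG R N hcomm h1 h2 h3 (by omega) hb2 hb3 ⟨by omega, by omega, by omega, by omega⟩

end

include hcomm hYB in
lemma claimA : ∀ len s a b : ℕ, 1 ≤ a → a < b → b < s → s + len ≤ N + 1 →
    R a b * pr R (rowL a s len) * pr R (rowL b s len)
      = pr R (rowL b s len) * pr R (rowL a s len) * R a b := by
  intro len
  induction len with
  | zero =>
    intro s a b _ _ _ _
    simp [rowL, pr]
  | succ n ih =>
    intro s a b h1 h2 h3 h4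
    rw [rowL_succ a s n, rowL_succ b s n, pr_cons, pr_cons]
    set A : G := pr R (rowL a (s + 1) n) with hA
    set B : G := pr R (rowL b (s + 1) n) with hB
    have hrow : ∀ p ∈ rowL a (s + 1) n, s < p.1 ∨ (s + 1 ≤ p.2 ∧ p.2 ≤ s + n ∧ p.1 = a) := by
      intro p hp
      simp only [rowL, List.mem_map, List.mem_range'_1] at hp
      obtain ⟨c, hc, rfl⟩ := hp
      right; exact ⟨hc.1, by omega, rfl⟩
    -- Commute (R b s) A
    have c1 : Commute (R b s) A := by
      apply commute_pr
      intro p hp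
      simp only [rowL, List.mem_map, List.mem_range'_1] at hp
      obtain ⟨c, hc, rfl⟩ := hp
      exact (commG R N hcomm h1 (by omega : a < c) (by omega) (by omega) h3 (by omega)
        ⟨by omega, by omega, by omega, by omega⟩).symm
    have c2 : Commute (R a s) B := by
      apply commute_pr
      intro p hp
      simp only [rowL, List.mem_map, List.mem_range'_1] at hp
      obtain ⟨c, hc, rfl⟩ := hp
      exact commG R N hcomm h1 (by omega : a < s) (by omega) (by omega) (by omega) (by omega)
        ⟨by omega, by omega, by omega, by omega⟩
    have yb : R a b * R a s * R b s = R b s * R a s * R a b :=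
      hYB a b s h1 h2 h3 (by omega)
    have ihe : R a b * A * B = B * A * R a b := ih (s + 1) a b h1 h2 (by omega) (by omega)
    -- assemble
    calc R a b * (R a s * A) * (R b s * B)
        = R a b * (R a s * (A * (R b s * B))) := by group
      _ = R a b * (R a s * (R b s * (A * B))) := by rw [c1.symm.left_comm B]
      _ = (R a b * R a s * R b s) * (A * B) := by group
      _ = (R b s * R a s * R a b) * (A * B) := by rw [yb]
      _ = R b s * (R a s * (R a b * A * B)) := by group
      _ = R b s * (R a s * (B * A * R a b)) := by rw [ihe]
      _ = R b s * (R a s * (B * (A * R a b))) := by group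
      _ = R b s * (B * (R a s * (A * R a b))) := by rw [c2.left_comm]
      _ = (R b s * B) * (R a s * A) * R a b := by group

include hcomm hYB in
lemma Lrow : ∀ k a m : ℕ, 1 ≤ a → a < m → m + k ≤ N →
    pr R (rowL a m (k + 1)) * pr R (WL m k)
      = pr R (WL m k) * pr R ((rowL a m (k + 1)).reverse) := by
  intro k
  induction k with
  | zero =>
    intro a m _ _ _
    simp [WL, rowL, pr]
  | succ n ih =>
    intro a m h1 h2 h3
    rw [rowL_succ a m (n + 1), WL_succ, pr_cons, pr_append, List.reverse_cons, pr_append,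
      pr_singleton]
    set A : G := pr R (rowL a (m + 1) (n + 1)) with hA
    set Bm : G := pr R (rowL m (m + 1) (n + 1)) with hBm
    set W' : G := pr R (WL (m + 1) n) with hW'
    have hclaim : R a m * A * Bm = Bm * A * R a m :=
      claimA R N hcomm hYB (n + 1) (m + 1) a m h1 h2 (by omega) (by omega)
    have hc : Commute (R a m) W' := by
      apply commute_pr_high R N hcomm h1 h2 (by omega)
      intro p hp
      have := mem_WL hp
      omega
    have ihe : A * W' = W' * pr R ((rowL a (m + 1) (n + 1)).reverse) :=
      ih a (m + 1) h1 (by omega) (by omega)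
    calc R a m * A * (Bm * W')
        = (R a m * A * Bm) * W' := by group
      _ = (Bm * A * R a m) * W' := by rw [hclaim]
      _ = Bm * (A * (R a m * W')) := by group
      _ = Bm * (A * (W' * R a m)) := by rw [hc.eq]
      _ = Bm * ((A * W') * R a m) := by group
      _ = Bm * ((W' * pr R ((rowL a (m + 1) (n + 1)).reverse)) * R a m) := by rw [ihe]
      _ = Bm * W' * (pr R ((rowL a (m + 1) (n + 1)).reverse) * R a m) := by group

include hcomm hYB in
lemma mainW : ∀ k m : ℕ, 1 ≤ m → m + k ≤ N →
    pr R (WL m k) = pr R ((WL m k).reverse) := by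
  intro k
  induction k with
  | zero =>
    intro m _ _
    simp [WL]
  | succ n ih =>
    intro m h1 h2
    rw [WL_succ, List.reverse_append, pr_append, pr_append]
    rw [Lrow R N hcomm hYB n m (m + 1) h1 (by omega) (by omega)]
    rw [ih (m + 1) (by omega) (by omega)]

end B2Aux

open B2Aux in
lemma pairList_eq_WL (N : ℕ) (hN : 1 ≤ N) : pairList N = WL 1 (N - 1) := by
  have key : ∀ a n : ℕ, (List.range n).filter (fun b => decide (a < b))
      = List.range' (a + 1) (n - (a + 1)) := by
    intro a n
    induction n with
    | zero => simp
    | succ n ihn =>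
      rw [List.range_succ, List.filter_append, ihn]
      by_cases h : a < n
      · have e1 : n + 1 - (a + 1) = (n - (a + 1)) + 1 := by omega
        rw [e1, List.range'_1_concat]
        simp only [List.filter_cons, List.filter_nil]
        rw [if_pos (by simpa using h)]
        congr 2
        omega
      · have e1 : n + 1 - (a + 1) = n - (a + 1) := by omega
        rw [e1]
        simp only [List.filter_cons, List.filter_nil]
        rw [if_neg (by simpa using h)]
        simp
  have step : ∀ a ∈ List.range (N + 1),
      (((List.range (N + 1)).map fun b => (a, b)).filter fun p => decide (1 ≤ p.1 ∧ p.1 < p.2))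
        = if 1 ≤ a then (List.range' (a + 1) (N - a)).map (fun b => (a, b)) else [] := by
    intro a _
    rw [List.filter_map]
    by_cases ha : 1 ≤ a
    · rw [if_pos ha]
      congr 1
      have hc : ((List.range (N + 1)).filter
          ((fun p : ℕ × ℕ => decide (1 ≤ p.1 ∧ p.1 < p.2)) ∘ fun b => (a, b)))
          = (List.range (N + 1)).filter (fun b => decide (a < b)) := by
        apply List.filter_congr
        intro b _
        simp [Function.comp, ha]
      rw [hc, key a (N + 1)]
      congr 1
      omega
    · rw [if_neg ha]
      have ha0 : a = 0 := by omega
      subst ha0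
      simp [Function.comp]
  unfold pairList
  rw [List.filter_flatMap, List.flatMap_congr step]
  have hsplit : List.range (N + 1) = 0 :: (List.range' 1 (N - 1) ++ [N]) := by
    rw [List.range_eq_range']
    rw [show N + 1 = (N - 1 + 1) + 1 from by omega]
    rw [List.range'_succ, List.range'_1_concat]
    congr 3
    omega
  rw [hsplit]
  simp only [List.flatMap_cons, List.flatMap_append, List.flatMap_nil, Nat.sub_self,
    List.range'_zero, List.map_nil, if_pos hN, List.append_nil]
  rw [if_neg (by omega : ¬ (1 ≤ 0))]
  simp only [List.nil_append]
  unfold WL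
  rw [show 1 + (N - 1) = N from by omega]
  apply List.flatMap_congr
  intro a ha
  simp only [List.mem_range'_1] at ha
  rw [if_pos ha.1]

/-- In the group `B(2,N)` (generators `R_{ab}`, `1 ≤ a < b ≤ N`, commuting when their
index sets are disjoint and satisfying the Yang–Baxter relations), the lexicographically
ordered product of all generators equals the reversely ordered product. -/
theorem word_eq_reverse_word_B2 {G : Type*} [Group G] (N : ℕ) (R : ℕ → ℕ → G)
    (hcomm : ∀ a b a' b' : ℕ, 1 ≤ a → a < b → b ≤ N → 1 ≤ a' → a' < b' → b' ≤ N →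
      ({a, b} : Finset ℕ) ∩ {a', b'} = ∅ → R a b * R a' b' = R a' b' * R a b)
    (hYB : ∀ a b c : ℕ, 1 ≤ a → a < b → b < c → c ≤ N →
      R a b * R a c * R b c = R b c * R a c * R a b) :
    ((pairList N).map fun p => R p.1 p.2).prod =
      ((pairList N).reverse.map fun p => R p.1 p.2).prod := by
  rcases Nat.eq_zero_or_pos N with h0 | hN
  · subst h0
    have : pairList 0 = [] := rfl
    simp [this]
  · rw [pairList_eq_WL N hN]
    exact B2Aux.mainW R N hcomm hYB (N - 1) 1 le_rfl (by omega)
end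

section
/- In the group B(n,N) (generators R_{a1,...,an} for 1 ≤ a1 < ... < an ≤ N, commuting unless their index sets share exactly n−1 elements, and satisfying the n-simplex relations ∏→_{1≤j≤n+1} R_{a1,...,âj,...,a(n+1)} = ∏←_{1≤j≤n+1} R_{a1,...,âj,...,a(n+1)} for each (n+1)-subset), the lexicographically ordered product W(n,N) of all generators equals the same product taken in the reverse order. -/
/-- Lexicographic order on finite subsets of `ℕ`, comparing their increasing
enumerations lexicographically. -/
def finsetLex (s t : Finset ℕ) : Prop :=
  List.Lex (· < ·) (s.sort (· ≤ ·)) (t.sort (· ≤ ·))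



section ListProd
variable {G : Type*} [Monoid G] {α : Type*}

lemma commute_map_prod (f : α → G) (x : G) (l : List α)
    (h : ∀ a ∈ l, Commute x (f a)) : Commute x (l.map f).prod := by
  refine Commute.list_prod_right _ _ ?_
  intro y hy
  obtain ⟨a, ha, rfl⟩ := List.mem_map.1 hy
  exact h a ha

lemma commute_prod_prod (f g : α → G) (l₁ l₂ : List α)
    (h : ∀ a ∈ l₁, ∀ b ∈ l₂, Commute (f a) (g b)) :
    Commute (l₁.map f).prod (l₂.map g).prod := by
  refine Commute.list_prod_left _ _ ?_
  intro y hy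
  obtain ⟨a, ha, rfl⟩ := List.mem_map.1 hy
  exact commute_map_prod g (f a) l₂ (h a ha)

lemma prod_filter_split (f : α → G) (q : α → Bool) :
    ∀ (l : List α), l.Pairwise (fun a b => q a = false → q b = true → Commute (f a) (f b)) →
      (l.map f).prod = ((l.filter q).map f).prod * ((l.filter (fun a => !q a)).map f).prod := by
  intro l hl
  induction l with
  | nil => simp
  | cons a l ih =>
    obtain ⟨h₁, h₂⟩ := List.pairwise_cons.1 hl
    by_cases hq : q a = true
    · rw [List.filter_cons_of_pos hq, List.filter_cons_of_neg (by simp [hq])]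
      simp only [List.map_cons, List.prod_cons, ih h₂, mul_assoc]
    · have hq' : q a = false := Bool.eq_false_iff.2 hq
      rw [List.filter_cons_of_neg (by simp [hq']), List.filter_cons_of_pos (by simp [hq'])]
      simp only [List.map_cons, List.prod_cons, ih h₂]
      have hc : Commute (f a) ((l.filter q).map f).prod := by
        refine commute_map_prod _ _ _ ?_
        intro b hb
        exact h₁ b (List.mem_of_mem_filter hb) hq' (List.of_mem_filter hb)
      rw [← mul_assoc, hc.eq, mul_assoc]

lemma prod_map_mul (f g : α → G) :
    ∀ l : List α, l.Pairwise (fun a b => Commute (g a) (f b)) →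
      (l.map fun a => f a * g a).prod = (l.map f).prod * (l.map g).prod := by
  intro l hl
  induction l with
  | nil => simp
  | cons a l ih =>
    obtain ⟨h₁, h₂⟩ := List.pairwise_cons.1 hl
    simp only [List.map_cons, List.prod_cons, ih h₂]
    have hc : Commute (g a) ((l.map f)).prod := commute_map_prod _ _ _ (fun b hb => h₁ b hb)
    rw [mul_assoc, ← mul_assoc (g a), hc.eq]
    simp [mul_assoc]

lemma prod_map_mul' (f g : α → G) :
    ∀ l : List α, l.Pairwise (fun a b => Commute (f a) (g b)) →
      (l.map fun a => g a * f a).prod = (l.map g).prod * (l.map f).prod := by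
  intro l hl
  induction l with
  | nil => simp
  | cons a l ih =>
    obtain ⟨h₁, h₂⟩ := List.pairwise_cons.1 hl
    simp only [List.map_cons, List.prod_cons, ih h₂]
    have hc : Commute (f a) ((l.map g)).prod := commute_map_prod _ _ _ (fun b hb => h₁ b hb)
    rw [mul_assoc, ← mul_assoc (f a), hc.eq]
    simp [mul_assoc]

end ListProd

section Lex

theorem List.eq_of_perm_of_sorted {α : Type*} {r : α → α → Prop} [Std.Antisymm r]
    {l₁ l₂ : List α} (hp : l₁.Perm l₂) (h₁ : l₁.Pairwise r) (h₂ : l₂.Pairwise r) :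
    l₁ = l₂ :=
  hp.eq_of_pairwise' h₁ h₂

lemma listLex_asymm : ∀ {l₁ l₂ : List ℕ}, List.Lex (· < ·) l₁ l₂ →
    List.Lex (· < ·) l₂ l₁ → False := by
  intro l₁ l₂ h₁
  induction h₁ with
  | nil => intro h; cases h
  | @cons a l₁ l₂ h ih =>
    intro h'
    cases h' with
    | cons h'' => exact ih h''
    | rel h'' => exact lt_irrefl _ h''
  | @rel a l₁ b l₂ h =>
    intro h'
    cases h' with
    | cons h'' => exact lt_irrefl _ h
    | rel h'' => exact lt_irrefl _ (h.trans h'')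

lemma finsetLex_asymm {s t : Finset ℕ} (h₁ : finsetLex s t) (h₂ : finsetLex t s) : False :=
  listLex_asymm h₁ h₂

instance : IsAntisymm (Finset ℕ) finsetLex :=
  ⟨fun _ _ h₁ h₂ => absurd h₂ (fun h => finsetLex_asymm h₁ h)⟩

lemma list_eq_of_sorted {l₁ l₂ : List (Finset ℕ)} (h₁ : l₁.Nodup) (h₂ : l₂.Nodup)
    (hs₁ : l₁.Pairwise finsetLex) (hs₂ : l₂.Pairwise finsetLex)
    (hm : ∀ s, s ∈ l₁ ↔ s ∈ l₂) : l₁ = l₂ :=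
  List.eq_of_perm_of_sorted ((List.perm_ext_iff_of_nodup h₁ h₂).2 hm) hs₁ hs₂

lemma eq_singleton_of_mem {l : List (Finset ℕ)} {x : Finset ℕ} (h : l.Nodup)
    (hm : ∀ s, s ∈ l ↔ s = x) : l = [x] :=
  List.perm_singleton.1 ((List.perm_ext_iff_of_nodup h (List.nodup_singleton x)).2 (by simpa using hm))

lemma sort_insert_max (c : Finset ℕ) (M : ℕ) (hcM : ∀ a ∈ c, a < M) :
    (insert M c).sort (· ≤ ·) = c.sort (· ≤ ·) ++ [M] := by
  have hM : M ∉ c := fun h => lt_irrefl M (hcM M h)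
  refine List.eq_of_perm_of_sorted ?_ (Finset.pairwise_sort _ _) ?_
  · refine (List.perm_ext_iff_of_nodup (Finset.sort_nodup _ _) ?_).2 ?_
    · simp only [List.nodup_append, List.nodup_singleton]
      refine ⟨Finset.sort_nodup _ _, ⟨trivial, ?_⟩⟩
      intro a ha b hb hab
      simp only [List.mem_singleton] at hb
      exact hM (by simpa [hab, hb] using (Finset.mem_sort _).1 ha)
    · intro a
      simp only [Finset.mem_sort, Finset.mem_insert, List.mem_append, List.mem_singleton]
      tauto
  · rw [List.pairwise_append]
    refine ⟨Finset.pairwise_sort _ _, List.pairwise_singleton _ _, ?_⟩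
    intro a ha b hb
    simp only [List.mem_singleton] at hb
    subst hb
    exact le_of_lt (hcM a ((Finset.mem_sort _).1 ha))

end Lex

section LexKey

lemma sort_insert_orderedInsert (c : Finset ℕ) (x : ℕ) (hx : x ∉ c) :
    (insert x c).sort (· ≤ ·) = (c.sort (· ≤ ·)).orderedInsert (· ≤ ·) x := by
  refine List.eq_of_perm_of_sorted ?_ (Finset.pairwise_sort _ _)
    (List.Pairwise.orderedInsert _ _ (Finset.pairwise_sort _ _))
  refine (List.perm_ext_iff_of_nodup (Finset.sort_nodup _ _) ?_).2 ?_
  · refine ((List.perm_orderedInsert _ _ _).nodup_iff).2 ?_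
    simp only [List.nodup_cons, Finset.mem_sort]
    exact ⟨hx, Finset.sort_nodup _ _⟩
  · intro a
    rw [(List.perm_orderedInsert (· ≤ ·) x (c.sort (· ≤ ·))).mem_iff, List.mem_cons]
    simp [Finset.mem_sort]

lemma lex_orderedInsert_append (x M : ℕ) (hxM : x < M) :
    ∀ (l : List ℕ), x ∉ l →
      List.Lex (· < ·) (l.orderedInsert (· ≤ ·) x) (l ++ [M]) := by
  intro l
  induction l with
  | nil => intro _; exact List.Lex.rel hxM
  | cons a l ih =>
    intro hx
    simp only [List.mem_cons] at hx
    push_neg at hx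
    rw [List.orderedInsert]
    by_cases h : x ≤ a
    · have : x < a := lt_of_le_of_ne h hx.1
      simp only [if_pos h, List.cons_append]
      exact List.Lex.rel this
    · simp only [if_neg h, List.cons_append]
      exact List.Lex.cons (ih hx.2)

/-- F1 : insert a small element vs insert the max element. -/
lemma lex_insert_max (c : Finset ℕ) (x M : ℕ) (hx : x ∉ c) (hxM : x < M)
    (hcM : ∀ a ∈ c, a < M) : finsetLex (insert x c) (insert M c) := by
  unfold finsetLex
  rw [sort_insert_max c M hcM, sort_insert_orderedInsert c x hx]
  exact lex_orderedInsert_append x M hxM _ (by simp [Finset.mem_sort, hx])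

/-- F2 : cancel a common last element in a Lex comparison of equal-length lists. -/
lemma lex_of_append {M : ℕ} : ∀ (l₁ l₂ : List ℕ), l₁.length = l₂.length →
    List.Lex (· < ·) (l₁ ++ [M]) (l₂ ++ [M]) → List.Lex (· < ·) l₁ l₂ := by
  intro l₁
  induction l₁ with
  | nil =>
    intro l₂ hlen h
    rw [List.length_nil] at hlen
    have : l₂ = [] := List.eq_nil_of_length_eq_zero hlen.symm
    subst this
    simp only [List.nil_append] at h
    cases h with
    | rel h' => exact absurd h' (lt_irrefl M)
    | cons h' => cases h'
  | cons a l₁ ih =>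
    intro l₂ hlen h
    cases l₂ with
    | nil => simp at hlen
    | cons b l₂ =>
      simp only [List.length_cons, Nat.add_right_cancel_iff] at hlen
      simp only [List.cons_append] at h
      cases h with
      | rel h' => exact List.Lex.rel h'
      | cons h' => exact List.Lex.cons (ih l₂ hlen h')

/-- the crossing lemma: if `s`,`t` have the same cardinality `K`, `M ∈ t`, `M ∉ s`,
all elements are `≤ M` (and `< M` in `s`), and they share `K-1` elements, then
`s` is lexicographically smaller. -/
lemma lex_cross {s t : Finset ℕ} {M K : ℕ} (hsc : s.card = K) (htc : t.card = K)
    (hMt : M ∈ t) (hMs : M ∉ s) (hsM : ∀ x ∈ s, x < M)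
    (hint : (s ∩ t).card + 1 = K) : finsetLex s t := by
  set c := t.erase M with hc
  have hct : c.card = K - 1 := by rw [hc, Finset.card_erase_of_mem hMt, htc]
  have hKpos : 1 ≤ K := htc ▸ Finset.card_pos.2 ⟨M, hMt⟩
  have hsub : s ∩ t ⊆ c := by
    intro y hy
    rw [hc, Finset.mem_erase]
    exact ⟨fun h => hMs (h ▸ (Finset.mem_inter.1 hy).1), (Finset.mem_inter.1 hy).2⟩
  have hceq : s ∩ t = c := by
    apply Finset.eq_of_subset_of_card_le hsub
    rw [hct]
    omega
  have hcs : c ⊆ s := hceq ▸ Finset.inter_subset_left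
  have hdiff : (s \ c).card = 1 := by
    rw [Finset.card_sdiff_of_subset hcs, hsc, hct]
    omega
  obtain ⟨x, hxval⟩ := Finset.card_eq_one.1 hdiff
  have hxs : x ∈ s := by
    have : x ∈ s \ c := hxval ▸ Finset.mem_singleton_self x
    exact (Finset.mem_sdiff.1 this).1
  have hxc : x ∉ c := by
    have : x ∈ s \ c := hxval ▸ Finset.mem_singleton_self x
    exact (Finset.mem_sdiff.1 this).2
  have hseq : s = insert x c := by
    apply Finset.eq_of_subset_of_card_le
    · intro y hy
      by_cases h : y ∈ c
      · exact Finset.mem_insert_of_mem h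
      · have : y ∈ s \ c := Finset.mem_sdiff.2 ⟨hy, h⟩
        rw [hxval] at this
        simp only [Finset.mem_singleton] at this
        exact this ▸ Finset.mem_insert_self x c
    · rw [Finset.card_insert_of_notMem hxc, hsc, hct]
      omega
  have hteq : t = insert M c := (Finset.insert_erase hMt).symm
  rw [hseq, hteq]
  exact lex_insert_max c x M hxc (hsM x hxs) (fun a ha => hsM a (hcs ha))

end LexKey

/-- The "packet" of an `(m+1)`-set `u` : the list of its `m`-subsets, in
*anti-lexicographic* order (erasing the smallest element gives the lex-largest subset). -/
def packetList (u : Finset ℕ) : List (Finset ℕ) :=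
  (u.sort (· ≤ ·)).map (fun a => u.erase a)

lemma packetList_insert (u : Finset ℕ) (M : ℕ) (h : ∀ a ∈ u, a < M) :
    packetList (insert M u)
      = (u.sort (· ≤ ·)).map (fun a => insert M (u.erase a)) ++ [u] := by
  have hMu : M ∉ u := fun hM => lt_irrefl M (h M hM)
  unfold packetList
  rw [sort_insert_max u M h, List.map_append]
  congr 1
  · refine List.map_congr_left ?_
    intro a ha
    have haM : M ≠ a := by
      intro he; exact absurd (he ▸ (Finset.mem_sort _).1 ha) hMu
    exact Finset.erase_insert_of_ne haM
  · simp [Finset.erase_insert hMu]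

lemma finsetLex_irrefl (s : Finset ℕ) : ¬ finsetLex s s :=
  fun h => finsetLex_asymm h h

/-- The core inductive lemma. -/
theorem core {G : Type*} [Monoid G] :
    ∀ (m : ℕ) (A : Finset ℕ) (X P Q : Finset ℕ → G)
      (_ : ∀ t s, t ⊆ A → s ⊆ A → t.card = m → s.card = m →
            (t ∩ s).card + 1 ≠ m → Commute (X t) (X s))
      (_ : ∀ t u, t ⊆ A → u ⊆ A → t.card = m → u.card = m + 1 → ¬ t ⊆ u →
            Commute (X t) (P u) ∧ Commute (X t) (Q u))
      (_ : ∀ u v, u ⊆ A → v ⊆ A → u.card = m + 1 → v.card = m + 1 →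
            (u ∩ v).card ≠ m → Commute (P u) (P v) ∧ Commute (Q u) (Q v))
      (_ : ∀ u, u ⊆ A → u.card = m + 1 →
            ((packetList u).map X).prod * P u = Q u * ((packetList u).reverse.map X).prod)
      (LX LP : List (Finset ℕ))
      (_ : ∀ s, s ∈ LX ↔ s ⊆ A ∧ s.card = m) (_ : LX.Nodup) (_ : LX.Pairwise finsetLex)
      (_ : ∀ s, s ∈ LP ↔ s ⊆ A ∧ s.card = m + 1) (_ : LP.Nodup) (_ : LP.Pairwise finsetLex),
      (LX.reverse.map X).prod * (LP.map P).prod = (LP.map Q).prod * (LX.map X).prod := by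
  intro m
  induction m with
  | zero =>
    intro A X P Q ha hb hd hc LX LP hLX hLXn hLXs hLP hLPn hLPs
    have hLXe : LX = [∅] := by
      refine eq_singleton_of_mem hLXn ?_
      intro s
      rw [hLX]
      constructor
      · rintro ⟨-, hcard⟩; exact Finset.card_eq_zero.1 hcard
      · rintro rfl; exact ⟨Finset.empty_subset _, Finset.card_empty⟩
    subst hLXe
    simp only [List.reverse_singleton, List.map_cons, List.map_nil, List.prod_cons,
      List.prod_nil, mul_one]
    -- goal : X ∅ * (LP.map P).prod = (LP.map Q).prod * X ∅
    have key : ∀ u ∈ LP, X ∅ * P u = Q u * X ∅ := by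
      intro u hu
      obtain ⟨husub, hucard⟩ := (hLP u).1 hu
      obtain ⟨a, rfl⟩ := Finset.card_eq_one.1 hucard
      have : packetList {a} = [∅] := by
        unfold packetList
        simp
      have h := hc {a} husub hucard
      rw [this] at h
      simpa using h
    clear hLP hLPn hLPs hLXn hLXs ha hb hd hc
    induction LP with
    | nil => simp
    | cons u l ih =>
      simp only [List.map_cons, List.prod_cons, ← mul_assoc]
      rw [key u List.mem_cons_self]
      rw [mul_assoc, ih (fun v hv => key v (List.mem_cons_of_mem u hv)), ← mul_assoc]
  | succ m ih =>
    intro A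
    induction A using Finset.strongInductionOn with
    | _ A ihA =>
    intro X P Q ha hb hd hc LX LP hLX hLXn hLXs hLP hLPn hLPs
    rcases A.eq_empty_or_nonempty with rfl | hA
    · have hLXe : LX = [] := by
        rw [List.eq_nil_iff_forall_not_mem]
        intro s hs
        obtain ⟨hsub, hcard⟩ := (hLX s).1 hs
        have : s = ∅ := Finset.subset_empty.1 hsub
        simp [this] at hcard
      have hLPe : LP = [] := by
        rw [List.eq_nil_iff_forall_not_mem]
        intro s hs
        obtain ⟨hsub, hcard⟩ := (hLP s).1 hs
        have : s = ∅ := Finset.subset_empty.1 hsub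
        simp [this] at hcard
      subst hLXe; subst hLPe; simp
    · set M := A.max' hA with hM
      have hMA : M ∈ A := A.max'_mem hA
      set A' := A.erase M with hA'
      have hA'sub : A' ⊆ A := Finset.erase_subset _ _
      have hA'lt : ∀ x ∈ A', x < M := by
        intro x hx
        obtain ⟨hne, hxA⟩ := Finset.mem_erase.1 hx
        exact lt_of_le_of_ne (A.le_max' x hxA) hne
      have hMA' : M ∉ A' := Finset.notMem_erase _ _
      -- subsets of A' as subsets of A not containing M
      have hsubA' : ∀ s : Finset ℕ, s ⊆ A' ↔ s ⊆ A ∧ M ∉ s := fun s => Finset.subset_erase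
      set qB : Finset ℕ → Bool := fun s => decide (M ∈ s) with hqB
      have hqBt : ∀ s : Finset ℕ, qB s = true ↔ M ∈ s := by intro s; simp [hqB]
      have hqBf : ∀ s : Finset ℕ, qB s = false ↔ M ∉ s := by intro s; simp [hqB]
      set LX0 := LX.filter (fun s => !qB s) with hLX0def
      set LX1 := LX.filter qB with hLX1def
      set LP0 := LP.filter (fun s => !qB s) with hLP0def
      set LP1 := LP.filter qB with hLP1def
      -- membership facts
      have hmemLX0 : ∀ s, s ∈ LX0 ↔ s ⊆ A' ∧ s.card = m + 1 := by
        intro s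
        rw [hLX0def, List.mem_filter, hLX, hsubA']
        simp only [Bool.not_eq_true']
        rw [hqBf]
        tauto
      have hmemLX1 : ∀ s, s ∈ LX1 ↔ (s ⊆ A ∧ s.card = m + 1) ∧ M ∈ s := by
        intro s
        rw [hLX1def, List.mem_filter, hLX, hqBt]
      have hmemLP0 : ∀ s, s ∈ LP0 ↔ s ⊆ A' ∧ s.card = m + 2 := by
        intro s
        rw [hLP0def, List.mem_filter, hLP, hsubA']
        simp only [Bool.not_eq_true']
        rw [hqBf]
        tauto
      have hmemLP1 : ∀ s, s ∈ LP1 ↔ (s ⊆ A ∧ s.card = m + 2) ∧ M ∈ s := by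
        intro s
        rw [hLP1def, List.mem_filter, hLP, hqBt]
      -- nodup/sorted facts for filters
      have hLX0n : LX0.Nodup := hLXn.filter _
      have hLX1n : LX1.Nodup := hLXn.filter _
      have hLP0n : LP0.Nodup := hLPn.filter _
      have hLP1n : LP1.Nodup := hLPn.filter _
      have hLX0s : LX0.Pairwise finsetLex := hLXs.filter _
      have hLX1s : LX1.Pairwise finsetLex := hLXs.filter _
      have hLP0s : LP0.Pairwise finsetLex := hLPs.filter _
      have hLP1s : LP1.Pairwise finsetLex := hLPs.filter _
      -- sort of a set containing M decomposes
      have hsortM : ∀ s : Finset ℕ, s ⊆ A → M ∈ s →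
          s.sort (· ≤ ·) = (s.erase M).sort (· ≤ ·) ++ [M] := by
        intro s hs hMs
        conv_lhs => rw [← Finset.insert_erase hMs]
        exact sort_insert_max _ _ (fun a ha =>
          lt_of_le_of_ne (A.le_max' a (hs (Finset.mem_of_mem_erase ha)))
            (Finset.ne_of_mem_erase ha))
      have herase : ∀ s s' : Finset ℕ, s ⊆ A → s' ⊆ A → M ∈ s → M ∈ s' →
          s.card = s'.card → finsetLex s s' → finsetLex (s.erase M) (s'.erase M) := by
        intro s s' hs hs' hMs hMs' hcd hlex
        unfold finsetLex at hlex ⊢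
        rw [hsortM s hs hMs, hsortM s' hs' hMs'] at hlex
        refine lex_of_append _ _ ?_ hlex
        rw [Finset.length_sort, Finset.length_sort,
          Finset.card_erase_of_mem hMs, Finset.card_erase_of_mem hMs', hcd]
      set Lt' := LX1.map (fun s => s.erase M) with hLt'def
      set Lu' := LP1.map (fun s => s.erase M) with hLu'def
      have hmemmap : ∀ (l : List (Finset ℕ)) (k : ℕ),
          (∀ s, s ∈ l ↔ (s ⊆ A ∧ s.card = k + 1) ∧ M ∈ s) →
          ∀ t, t ∈ l.map (fun s => s.erase M) ↔ t ⊆ A' ∧ t.card = k := by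
        intro l k hl t
        constructor
        · intro ht
          obtain ⟨s, hs, rfl⟩ := List.mem_map.1 ht
          obtain ⟨⟨hsub, hcard⟩, hMs⟩ := (hl s).1 hs
          refine ⟨Finset.erase_subset_erase M hsub, ?_⟩
          rw [Finset.card_erase_of_mem hMs, hcard]
          omega
        · rintro ⟨hsub, hcard⟩
          have hMt : M ∉ t := fun h => hMA' (hsub h)
          refine List.mem_map.2 ⟨insert M t, ?_, ?_⟩
          · rw [hl]
            refine ⟨⟨Finset.insert_subset_iff.2 ⟨hMA, hsub.trans hA'sub⟩, ?_⟩,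
              Finset.mem_insert_self _ _⟩
            rw [Finset.card_insert_of_notMem hMt, hcard]
          · exact Finset.erase_insert hMt
      have hmemLt' : ∀ t, t ∈ Lt' ↔ t ⊆ A' ∧ t.card = m := hmemmap LX1 m hmemLX1
      have hmemLu' : ∀ t, t ∈ Lu' ↔ t ⊆ A' ∧ t.card = m + 1 := hmemmap LP1 (m + 1) hmemLP1
      have hmapnodup : ∀ (l : List (Finset ℕ)),
          (∀ s ∈ l, M ∈ s) → l.Nodup → (l.map (fun s => s.erase M)).Nodup := by
        intro l hM hn
        refine hn.map_on ?_
        intro s hs s' hs' he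
        rw [← Finset.insert_erase (hM s hs), ← Finset.insert_erase (hM s' hs'), he]
      have hLt'n : Lt'.Nodup :=
        hmapnodup LX1 (fun s hs => ((hmemLX1 s).1 hs).2) hLX1n
      have hLu'n : Lu'.Nodup :=
        hmapnodup LP1 (fun s hs => ((hmemLP1 s).1 hs).2) hLP1n
      have hmapsorted : ∀ (l : List (Finset ℕ)) (k : ℕ),
          (∀ s, s ∈ l ↔ (s ⊆ A ∧ s.card = k + 1) ∧ M ∈ s) → l.Pairwise finsetLex →
          (l.map (fun s => s.erase M)).Pairwise finsetLex := by
        intro l k hl hs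
        rw [List.pairwise_map]
        refine hs.imp_of_mem ?_
        intro a b hain hbin hab
        obtain ⟨⟨ha1, ha2⟩, ha3⟩ := (hl a).1 hain
        obtain ⟨⟨hb1, hb2⟩, hb3⟩ := (hl b).1 hbin
        exact herase a b ha1 hb1 ha3 hb3 (by rw [ha2, hb2]) hab
      have hLt's : Lt'.Pairwise finsetLex := hmapsorted LX1 m hmemLX1 hLX1s
      have hLu's : Lu'.Pairwise finsetLex := hmapsorted LP1 (m + 1) hmemLP1 hLP1s
      -- crossing commutation facts
      have hltM : ∀ s : Finset ℕ, s ⊆ A → M ∉ s → ∀ x ∈ s, x < M := by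
        intro s hs hMs x hx
        exact lt_of_le_of_ne (A.le_max' x (hs hx)) (fun he => hMs (he ▸ hx))
      have hcrossX : ∀ s t, s ∈ LX → t ∈ LX → finsetLex s t → M ∈ s → M ∉ t →
          Commute (X s) (X t) := by
        intro s t hsin htin hlex hMs hMt
        obtain ⟨hs1, hs2⟩ := (hLX s).1 hsin
        obtain ⟨ht1, ht2⟩ := (hLX t).1 htin
        refine ha s t hs1 ht1 hs2 ht2 ?_
        intro hcontra
        refine finsetLex_asymm hlex
          (lex_cross ht2 hs2 hMs hMt (hltM t ht1 hMt) ?_)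
        rw [Finset.inter_comm]
        exact hcontra
      have hcrossP : ∀ s t, s ∈ LP → t ∈ LP → finsetLex s t → M ∈ s → M ∉ t →
          Commute (P s) (P t) ∧ Commute (Q s) (Q t) := by
        intro s t hsin htin hlex hMs hMt
        obtain ⟨hs1, hs2⟩ := (hLP s).1 hsin
        obtain ⟨ht1, ht2⟩ := (hLP t).1 htin
        refine hd s t hs1 ht1 hs2 ht2 ?_
        intro hcontra
        refine finsetLex_asymm hlex
          (lex_cross ht2 hs2 hMs hMt (hltM t ht1 hMt) ?_)
        rw [Finset.inter_comm, hcontra]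
      have hnotnot : (fun a : Finset ℕ => !(!qB a)) = qB := by
        funext a; simp
      -- splitting the four products
      have eqX : (LX.map X).prod = (LX0.map X).prod * (LX1.map X).prod := by
        have hp : LX.Pairwise (fun a b => (!qB a) = false → (!qB b) = true →
            Commute (X a) (X b)) := by
          refine hLXs.imp_of_mem ?_
          intro a b hain hbin hab h1 h2
          simp only [Bool.not_eq_false'] at h1
          simp only [Bool.not_eq_true'] at h2
          exact hcrossX a b hain hbin hab ((hqBt a).1 h1) ((hqBf b).1 h2)
        have := prod_filter_split X (fun s => !qB s) LX hp
        rw [this, hnotnot]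
      have eqXr : (LX.reverse.map X).prod
          = (LX1.reverse.map X).prod * (LX0.reverse.map X).prod := by
        have hp : LX.reverse.Pairwise (fun a b => qB a = false → qB b = true →
            Commute (X a) (X b)) := by
          rw [List.pairwise_reverse]
          refine hLXs.imp_of_mem ?_
          intro a b hain hbin hab h1 h2
          exact (hcrossX a b hain hbin hab ((hqBt a).1 h2) ((hqBf b).1 h1)).symm
        have := prod_filter_split X qB LX.reverse hp
        rw [this, List.filter_reverse, List.filter_reverse]
      have eqP : (LP.map P).prod = (LP0.map P).prod * (LP1.map P).prod := by
        have hp : LP.Pairwise (fun a b => (!qB a) = false → (!qB b) = true →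
            Commute (P a) (P b)) := by
          refine hLPs.imp_of_mem ?_
          intro a b hain hbin hab h1 h2
          simp only [Bool.not_eq_false'] at h1
          simp only [Bool.not_eq_true'] at h2
          exact (hcrossP a b hain hbin hab ((hqBt a).1 h1) ((hqBf b).1 h2)).1
        have := prod_filter_split P (fun s => !qB s) LP hp
        rw [this, hnotnot]
      have eqQ : (LP.map Q).prod = (LP0.map Q).prod * (LP1.map Q).prod := by
        have hp : LP.Pairwise (fun a b => (!qB a) = false → (!qB b) = true →
            Commute (Q a) (Q b)) := by
          refine hLPs.imp_of_mem ?_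
          intro a b hain hbin hab h1 h2
          simp only [Bool.not_eq_false'] at h1
          simp only [Bool.not_eq_true'] at h2
          exact (hcrossP a b hain hbin hab ((hqBt a).1 h1) ((hqBf b).1 h2)).2
        have := prod_filter_split Q (fun s => !qB s) LP hp
        rw [this, hnotnot]
      -- the unprimed induction hypothesis
      have eq5 : (LX0.reverse.map X).prod * (LP0.map P).prod
          = (LP0.map Q).prod * (LX0.map X).prod := by
        refine ihA A' (Finset.erase_ssubset hMA) X P Q ?_ ?_ ?_ ?_ LX0 LP0
          hmemLX0 hLX0n hLX0s hmemLP0 hLP0n hLP0s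
        · intro t s ht hs h1 h2 h3
          exact ha t s (ht.trans hA'sub) (hs.trans hA'sub) h1 h2 h3
        · intro t u ht hu h1 h2 h3
          exact hb t u (ht.trans hA'sub) (hu.trans hA'sub) h1 h2 h3
        · intro u v hu hv h1 h2 h3
          exact hd u v (hu.trans hA'sub) (hv.trans hA'sub) h1 h2 h3
        · intro u hu h1
          exact hc u (hu.trans hA'sub) h1
      -- primed data
      set X' : Finset ℕ → G := fun t => X (insert M t) with hX'def
      set P' : Finset ℕ → G := fun u => X u * P (insert M u) with hP'def
      set Q' : Finset ℕ → G := fun u => Q (insert M u) * X u with hQ'def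
      have hins : ∀ t : Finset ℕ, t ⊆ A' → insert M t ⊆ A :=
        fun t ht => Finset.insert_subset_iff.2 ⟨hMA, ht.trans hA'sub⟩
      have hMnot : ∀ t : Finset ℕ, t ⊆ A' → M ∉ t := fun t ht h => hMA' (ht h)
      have hinscard : ∀ (t : Finset ℕ) (k : ℕ), t ⊆ A' → t.card = k →
          (insert M t).card = k + 1 := by
        intro t k ht hck
        rw [Finset.card_insert_of_notMem (hMnot t ht), hck]
      have hsub_ins : ∀ t u : Finset ℕ, t ⊆ A' → insert M t ⊆ insert M u → t ⊆ u := by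
        intro t u ht hsub x hx
        rcases Finset.mem_insert.1 (hsub (Finset.mem_insert_of_mem hx)) with h | h
        · exact absurd hx (h ▸ hMnot t ht)
        · exact h
      have hsub_of_subins : ∀ t u : Finset ℕ, t ⊆ A' → t ⊆ insert M u → t ⊆ u := by
        intro t u ht hsub x hx
        rcases Finset.mem_insert.1 (hsub hx) with h | h
        · exact absurd hx (h ▸ hMnot t ht)
        · exact h
      have hinterins : ∀ t s : Finset ℕ, t ⊆ A' →
          ((insert M t ∩ insert M s).card = (t ∩ s).card + 1) := by
        intro t s ht
        have h1 : insert M t ∩ insert M s = insert M (t ∩ s) := by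
          ext x
          simp only [Finset.mem_inter, Finset.mem_insert]
          tauto
        rw [h1, Finset.card_insert_of_notMem
          (fun h => hMnot t ht (Finset.mem_inter.1 h).1)]
      -- primed hypotheses
      have ha' : ∀ t s, t ⊆ A' → s ⊆ A' → t.card = m → s.card = m →
          (t ∩ s).card + 1 ≠ m → Commute (X' t) (X' s) := by
        intro t s ht hs hct hcs hcond
        refine ha (insert M t) (insert M s) (hins t ht) (hins s hs)
          (hinscard t m ht hct) (hinscard s m hs hcs) ?_
        rw [hinterins t s ht]
        omega
      have hb' : ∀ t u, t ⊆ A' → u ⊆ A' → t.card = m → u.card = m + 1 → ¬ t ⊆ u →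
          Commute (X' t) (P' u) ∧ Commute (X' t) (Q' u) := by
        intro t u ht hu hct hcu hns
        have c1 : Commute (X (insert M t)) (X u) := by
          refine ha (insert M t) u (hins t ht) (hu.trans hA'sub)
            (hinscard t m ht hct) hcu ?_
          rw [Finset.insert_inter_of_notMem (hMnot u hu)]
          have hss : t ∩ u ⊂ t := by
            refine Finset.ssubset_iff_subset_ne.2 ⟨Finset.inter_subset_left, ?_⟩
            intro he
            exact hns (Finset.inter_eq_left.1 he)
          have := Finset.card_lt_card hss
          omega
        have c2 : Commute (X (insert M t)) (P (insert M u))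
            ∧ Commute (X (insert M t)) (Q (insert M u)) := by
          refine hb (insert M t) (insert M u) (hins t ht) (hins u hu)
            (hinscard t m ht hct) (hinscard u (m + 1) hu hcu) ?_
          intro hsub
          exact hns (hsub_ins t u ht hsub)
        exact ⟨c1.mul_right c2.1, c2.2.mul_right c1⟩
      have hd' : ∀ u v, u ⊆ A' → v ⊆ A' → u.card = m + 1 → v.card = m + 1 →
          (u ∩ v).card ≠ m → Commute (P' u) (P' v) ∧ Commute (Q' u) (Q' v) := by
        intro u v hu hv hcu hcv hcond
        by_cases he : u = v
        · subst he; exact ⟨Commute.refl _, Commute.refl _⟩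
        have cX : Commute (X u) (X v) := by
          refine ha u v (hu.trans hA'sub) (hv.trans hA'sub) hcu hcv ?_
          omega
        have hnsub : ∀ a b : Finset ℕ, a ⊆ A' → a.card = m + 1 → b.card = m + 1 →
            a ≠ b → ¬ a ⊆ insert M b := by
          intro a b haA hca hcb hne hsub
          have hab : a ⊆ b := hsub_of_subins a b haA hsub
          exact hne (Finset.eq_of_subset_of_card_le hab (by omega))
        have cuv : Commute (X u) (P (insert M v)) ∧ Commute (X u) (Q (insert M v)) :=
          hb u (insert M v) (hu.trans hA'sub) (hins v hv) hcu
            (hinscard v (m + 1) hv hcv) (hnsub u v hu hcu hcv he)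
        have cvu : Commute (X v) (P (insert M u)) ∧ Commute (X v) (Q (insert M u)) :=
          hb v (insert M u) (hv.trans hA'sub) (hins u hu) hcv
            (hinscard u (m + 1) hu hcu) (hnsub v u hv hcv hcu (Ne.symm he))
        have cPP : Commute (P (insert M u)) (P (insert M v))
            ∧ Commute (Q (insert M u)) (Q (insert M v)) := by
          refine hd (insert M u) (insert M v) (hins u hu) (hins v hv)
            (hinscard u (m + 1) hu hcu) (hinscard v (m + 1) hv hcv) ?_
          rw [hinterins u v hu]
          omega
        constructor
        · exact Commute.mul_left (cX.mul_right cuv.1) (cvu.1.symm.mul_right cPP.1)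
        · exact Commute.mul_left (cPP.2.mul_right cvu.2.symm) (cuv.2.mul_right cX)
      have hc' : ∀ u, u ⊆ A' → u.card = m + 1 →
          ((packetList u).map X').prod * P' u
            = Q' u * ((packetList u).reverse.map X').prod := by
        intro u hu hcu
        have hulM : ∀ a ∈ u, a < M := fun a haa => hA'lt a (hu haa)
        have h := hc (insert M u) (hins u hu) (hinscard u (m + 1) hu hcu)
        rw [packetList_insert u M hulM] at h
        have hmap1 : ((u.sort (· ≤ ·)).map (fun a => insert M (u.erase a))).map X
            = (packetList u).map X' := by
          unfold packetList
          rw [List.map_map, List.map_map]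
          rfl
        rw [List.map_append, hmap1, List.reverse_append, List.reverse_singleton,
          List.map_append] at h
        simp only [List.map_cons, List.map_nil, List.prod_append, List.prod_cons,
          List.prod_nil, mul_one, List.singleton_append] at h
        rw [List.map_reverse, hmap1] at h
        simp only [hP'def, hQ'def]
        rw [List.map_reverse]
        rw [← mul_assoc, h, ← mul_assoc]
      have eq9 : (Lt'.reverse.map X').prod * (Lu'.map P').prod
          = (Lu'.map Q').prod * (Lt'.map X').prod :=
        ih A' X' P' Q' ha' hb' hd' hc' Lt' Lu' hmemLt' hLt'n hLt's hmemLu' hLu'n hLu's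
      -- identifications of lists
      have idX : Lt'.map X' = LX1.map X := by
        rw [hLt'def, List.map_map]
        refine List.map_congr_left ?_
        intro s hs
        have hMs : M ∈ s := ((hmemLX1 s).1 hs).2
        simp only [Function.comp, hX'def, Finset.insert_erase hMs]
      have idXr : Lt'.reverse.map X' = LX1.reverse.map X := by
        rw [List.map_reverse, List.map_reverse, idX]
      have idP : Lu'.map (fun u => P (insert M u)) = LP1.map P := by
        rw [hLu'def, List.map_map]
        refine List.map_congr_left ?_
        intro s hs
        have hMs : M ∈ s := ((hmemLP1 s).1 hs).2
        simp only [Function.comp, Finset.insert_erase hMs]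
      have idQ : Lu'.map (fun u => Q (insert M u)) = LP1.map Q := by
        rw [hLu'def, List.map_map]
        refine List.map_congr_left ?_
        intro s hs
        have hMs : M ∈ s := ((hmemLP1 s).1 hs).2
        simp only [Function.comp, Finset.insert_erase hMs]
      have idLu : Lu' = LX0 :=
        list_eq_of_sorted hLu'n hLX0n hLu's hLX0s
          (fun s => by rw [hmemLu' s, hmemLX0 s])
      -- ne from sorted
      have hne_of_lex : ∀ a b : Finset ℕ, finsetLex a b → a ≠ b := by
        intro a b hab he
        exact finsetLex_asymm hab (he ▸ hab)
      -- eq6 : primed letters commute past Q-factors not containing M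
      have eq6 : Commute ((LX1.reverse.map X).prod) ((LP0.map Q).prod) := by
        refine commute_prod_prod X Q _ _ ?_
        intro a hain b hbin
        obtain ⟨⟨ha1, ha2⟩, ha3⟩ := (hmemLX1 a).1 (List.mem_reverse.1 hain)
        obtain ⟨hb1, hb2⟩ := (hmemLP0 b).1 hbin
        refine (hb a b ha1 (hb1.trans hA'sub) ha2 hb2 ?_).2
        intro hsub
        exact hMnot b hb1 (hsub ha3)
      -- eq7
      have eq7 : (LX0.map X).prod * (LP1.map P).prod = (Lu'.map P').prod := by
        have hp : Lu'.Pairwise (fun a b => Commute (P (insert M a)) (X b)) := by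
          refine hLu's.imp_of_mem ?_
          intro a b hain hbin hab
          obtain ⟨ha1, ha2⟩ := (hmemLu' a).1 hain
          obtain ⟨hb1, hb2⟩ := (hmemLu' b).1 hbin
          refine ((hb b (insert M a) (hb1.trans hA'sub) (hins a ha1) hb2
            (hinscard a (m + 1) ha1 ha2) ?_).1).symm
          intro hsub
          have hba : b ⊆ a := hsub_of_subins b a hb1 hsub
          exact hne_of_lex a b hab
            (Finset.eq_of_subset_of_card_le hba (by omega)).symm
        have hsplit := prod_map_mul X (fun u => P (insert M u)) Lu' hp
        rw [hP'def]
        rw [hsplit, idP, idLu]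
      -- eq8
      have eq8 : (Lu'.map Q').prod = (LP1.map Q).prod * (LX0.map X).prod := by
        have hp : Lu'.Pairwise (fun a b => Commute (X a) (Q (insert M b))) := by
          refine hLu's.imp_of_mem ?_
          intro a b hain hbin hab
          obtain ⟨ha1, ha2⟩ := (hmemLu' a).1 hain
          obtain ⟨hb1, hb2⟩ := (hmemLu' b).1 hbin
          refine (hb a (insert M b) (ha1.trans hA'sub) (hins b hb1) ha2
            (hinscard b (m + 1) hb1 hb2) ?_).2
          intro hsub
          have hba : a ⊆ b := hsub_of_subins a b ha1 hsub
          exact hne_of_lex a b hab (Finset.eq_of_subset_of_card_le hba (by omega))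
        have hsplit := prod_map_mul' X (fun u => Q (insert M u)) Lu' hp
        rw [hQ'def]
        rw [hsplit, idQ, idLu]
      -- final assembly
      rw [eqXr, eqP, eqQ, eqX]
      rw [mul_assoc, ← mul_assoc ((LX0.reverse.map X).prod), eq5,
        mul_assoc ((LP0.map Q).prod), eq7, ← mul_assoc, eq6.eq,
        mul_assoc, ← idXr, eq9, eq8, idX]
      rw [mul_assoc ((LP1.map Q).prod), ← mul_assoc]



/-- In the group `B(n,N)` (generators indexed by `n`-element subsets of `{1,…,N}`,
commuting unless their index sets share exactly `n-1` elements, and satisfying the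
`n`-simplex relations), the lexicographically ordered product `W(n,N)` of all
generators equals the same product taken in the reverse order. -/
theorem word_eq_reverse_word_Bn {G : Type*} [Group G] (n N : ℕ) (hn : 1 ≤ n) (hnN : n ≤ N)
    (R : Finset ℕ → G)
    (hcomm : ∀ s t : Finset ℕ, s ⊆ Finset.Icc 1 N → t ⊆ Finset.Icc 1 N →
      s.card = n → t.card = n → (s ∩ t).card ≠ n - 1 → R s * R t = R t * R s)
    (hsimplex : ∀ u : Finset ℕ, u ⊆ Finset.Icc 1 N → u.card = n + 1 →
      ((u.sort (· ≤ ·)).map fun a => R (u.erase a)).prod =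
        ((u.sort (· ≤ ·)).reverse.map fun a => R (u.erase a)).prod)
    (L : List (Finset ℕ))
    (hL : ∀ s : Finset ℕ, s ∈ L ↔ s ⊆ Finset.Icc 1 N ∧ s.card = n)
    (hnodup : L.Nodup) (hsorted : L.Pairwise finsetLex) :
    (L.map R).prod = (L.reverse.map R).prod := by
  clear hnN
  obtain ⟨m, rfl⟩ : ∃ m, n = m + 1 := ⟨n - 1, by omega⟩
  clear hn
  -- restate the simplex relation in terms of `packetList`
  have hsimp : ∀ u : Finset ℕ, u ⊆ Finset.Icc 1 N → u.card = m + 2 →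
      ((packetList u).map R).prod = ((packetList u).reverse.map R).prod := by
    intro u hu hcu
    have h := hsimplex u hu (by omega)
    unfold packetList
    rw [List.map_map]
    rw [← List.map_reverse, List.map_map]
    exact h
  suffices h : ∀ K : ℕ, K ≤ N → ∀ L' : List (Finset ℕ),
      (∀ s, s ∈ L' ↔ s ⊆ Finset.Icc 1 K ∧ s.card = m + 1) → L'.Nodup →
      L'.Pairwise finsetLex →
      (L'.map R).prod = (L'.reverse.map R).prod by
    exact h N le_rfl L hL hnodup hsorted
  intro K
  induction K with
  | zero =>
    intro _ L' hL' _ _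
    have : L' = [] := by
      rw [List.eq_nil_iff_forall_not_mem]
      intro s hs
      obtain ⟨h1, h2⟩ := (hL' s).1 hs
      have : s = ∅ := by
        rw [← Finset.subset_empty, ← Finset.Icc_eq_empty (by omega : ¬ (1:ℕ) ≤ 0)]
        exact h1
      rw [this] at h2
      simp at h2
    rw [this]
    simp
  | succ K ihK =>
    intro hKN L' hL' hLn' hLs'
    set M := K + 1 with hMdef
    have hsubI : ∀ s : Finset ℕ, s ⊆ Finset.Icc 1 K ↔ s ⊆ Finset.Icc 1 M ∧ M ∉ s := by
      intro s
      constructor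
      · intro hsK
        constructor
        · exact hsK.trans (Finset.Icc_subset_Icc le_rfl (by omega))
        · intro hMs
          have := Finset.mem_Icc.1 (hsK hMs)
          omega
      · rintro ⟨h1, h2⟩ x hx
        have hx1 := Finset.mem_Icc.1 (h1 hx)
        rw [Finset.mem_Icc]
        have : x ≠ M := fun he => h2 (he ▸ hx)
        omega
    have hIN : Finset.Icc 1 M ⊆ Finset.Icc 1 N := Finset.Icc_subset_Icc le_rfl hKN
    have hKN' : Finset.Icc 1 K ⊆ Finset.Icc 1 N :=
      Finset.Icc_subset_Icc le_rfl (by omega)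
    have hltM : ∀ s : Finset ℕ, s ⊆ Finset.Icc 1 M → M ∉ s → ∀ x ∈ s, x < M := by
      intro s hs hMs x hx
      have h1 := Finset.mem_Icc.1 (hs hx)
      have : x ≠ M := fun he => hMs (he ▸ hx)
      omega
    have hltM' : ∀ s : Finset ℕ, s ⊆ Finset.Icc 1 K → ∀ x ∈ s, x < M := by
      intro s hs x hx
      have := Finset.mem_Icc.1 (hs hx)
      omega
    -- crossing commutation
    have hcross : ∀ s t : Finset ℕ, s ∈ L' → t ∈ L' → finsetLex s t → M ∈ s → M ∉ t →
        Commute (R s) (R t) := by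
      intro s t hsin htin hlex hMs hMt
      obtain ⟨hs1, hs2⟩ := (hL' s).1 hsin
      obtain ⟨ht1, ht2⟩ := (hL' t).1 htin
      refine hcomm s t (hs1.trans hIN) (ht1.trans hIN) hs2 ht2 ?_
      intro hcontra
      refine finsetLex_asymm hlex (lex_cross ht2 hs2 hMs hMt (hltM t ht1 hMt) ?_)
      rw [Finset.inter_comm, hcontra]
      omega
    set qB : Finset ℕ → Bool := fun s => decide (M ∈ s) with hqB
    have hqBt : ∀ s : Finset ℕ, qB s = true ↔ M ∈ s := by intro s; simp [hqB]
    have hqBf : ∀ s : Finset ℕ, qB s = false ↔ M ∉ s := by intro s; simp [hqB]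
    set L0 := L'.filter (fun s => !qB s) with hL0def
    set L1 := L'.filter qB with hL1def
    have hnotnot : (fun a : Finset ℕ => !(!qB a)) = qB := by funext a; simp
    have hmemL0 : ∀ s, s ∈ L0 ↔ s ⊆ Finset.Icc 1 K ∧ s.card = m + 1 := by
      intro s
      rw [hL0def, List.mem_filter, hL', hsubI]
      simp only [Bool.not_eq_true']
      rw [hqBf]
      tauto
    have hmemL1 : ∀ s, s ∈ L1 ↔ (s ⊆ Finset.Icc 1 M ∧ s.card = m + 1) ∧ M ∈ s := by
      intro s
      rw [hL1def, List.mem_filter, hL', hqBt]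
    have hL0n : L0.Nodup := hLn'.filter _
    have hL1n : L1.Nodup := hLn'.filter _
    have hL0s : L0.Pairwise finsetLex := hLs'.filter _
    have hL1s : L1.Pairwise finsetLex := hLs'.filter _
    -- splitting
    have eqL : (L'.map R).prod = (L0.map R).prod * (L1.map R).prod := by
      have hp : L'.Pairwise (fun a b => (!qB a) = false → (!qB b) = true →
          Commute (R a) (R b)) := by
        refine hLs'.imp_of_mem ?_
        intro a b hain hbin hab h1 h2
        simp only [Bool.not_eq_false'] at h1
        simp only [Bool.not_eq_true'] at h2
        exact hcross a b hain hbin hab ((hqBt a).1 h1) ((hqBf b).1 h2)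
      have := prod_filter_split R (fun s => !qB s) L' hp
      rw [this, hnotnot]
    have eqLr : (L'.reverse.map R).prod
        = (L1.reverse.map R).prod * (L0.reverse.map R).prod := by
      have hp : L'.reverse.Pairwise (fun a b => qB a = false → qB b = true →
          Commute (R a) (R b)) := by
        rw [List.pairwise_reverse]
        refine hLs'.imp_of_mem ?_
        intro a b hain hbin hab h1 h2
        exact (hcross a b hain hbin hab ((hqBt a).1 h2) ((hqBf b).1 h1)).symm
      have := prod_filter_split R qB L'.reverse hp
      rw [this, List.filter_reverse, List.filter_reverse]
    -- induction hypothesis on L0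
    have ih0 : (L0.map R).prod = (L0.reverse.map R).prod :=
      ihK (by omega) L0 hmemL0 hL0n hL0s
    -- the primed system
    set X : Finset ℕ → G := fun t => R (insert M t) with hXdef
    set LX := L1.map (fun s => s.erase M) with hLXdef
    have hinsub : ∀ t : Finset ℕ, t ⊆ Finset.Icc 1 K → insert M t ⊆ Finset.Icc 1 N := by
      intro t ht
      refine Finset.insert_subset_iff.2 ⟨?_, ht.trans hKN'⟩
      rw [Finset.mem_Icc]
      omega
    have hMnotK : ∀ t : Finset ℕ, t ⊆ Finset.Icc 1 K → M ∉ t := by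
      intro t ht h
      have := Finset.mem_Icc.1 (ht h)
      omega
    have hinscard : ∀ (t : Finset ℕ) (k : ℕ), t ⊆ Finset.Icc 1 K → t.card = k →
        (insert M t).card = k + 1 := by
      intro t k ht hck
      rw [Finset.card_insert_of_notMem (hMnotK t ht), hck]
    have hsub_of_subins : ∀ t u : Finset ℕ, t ⊆ Finset.Icc 1 K → t ⊆ insert M u →
        t ⊆ u := by
      intro t u ht hsub x hx
      rcases Finset.mem_insert.1 (hsub hx) with h | h
      · exact absurd hx (h ▸ hMnotK t ht)
      · exact h
    -- membership etc. for LX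
    have hmemLX : ∀ t, t ∈ LX ↔ t ⊆ Finset.Icc 1 K ∧ t.card = m := by
      intro t
      constructor
      · intro ht
        obtain ⟨s, hs, rfl⟩ := List.mem_map.1 ht
        obtain ⟨⟨hsub, hcard⟩, hMs⟩ := (hmemL1 s).1 hs
        constructor
        · rw [hsubI]
          exact ⟨(Finset.erase_subset _ _).trans hsub, Finset.notMem_erase _ _⟩
        · rw [Finset.card_erase_of_mem hMs, hcard]
          omega
      · rintro ⟨hsub, hcard⟩
        have hMt : M ∉ t := hMnotK t hsub
        refine List.mem_map.2 ⟨insert M t, ?_, Finset.erase_insert hMt⟩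
        rw [hmemL1]
        refine ⟨⟨Finset.insert_subset_iff.2 ⟨?_, hsub.trans ?_⟩, ?_⟩,
          Finset.mem_insert_self _ _⟩
        · rw [Finset.mem_Icc]; omega
        · exact Finset.Icc_subset_Icc le_rfl (by omega)
        · rw [Finset.card_insert_of_notMem hMt, hcard]
    have hLXn : LX.Nodup := by
      refine hLn'.filter _ |>.map_on ?_
      intro s hs s' hs' he
      rw [← Finset.insert_erase ((hmemL1 s).1 hs).2,
        ← Finset.insert_erase ((hmemL1 s').1 hs').2, he]
    have hsortM : ∀ s : Finset ℕ, s ⊆ Finset.Icc 1 M → M ∈ s →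
        s.sort (· ≤ ·) = (s.erase M).sort (· ≤ ·) ++ [M] := by
      intro s hs hMs
      conv_lhs => rw [← Finset.insert_erase hMs]
      refine sort_insert_max _ _ ?_
      intro a ha
      have h1 := Finset.mem_Icc.1 (hs (Finset.mem_of_mem_erase ha))
      have h2 := Finset.ne_of_mem_erase ha
      omega
    have hLXs : LX.Pairwise finsetLex := by
      rw [hLXdef, List.pairwise_map]
      refine hL1s.imp_of_mem ?_
      intro a b hain hbin hab
      obtain ⟨⟨ha1, ha2⟩, ha3⟩ := (hmemL1 a).1 hain
      obtain ⟨⟨hb1, hb2⟩, hb3⟩ := (hmemL1 b).1 hbin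
      unfold finsetLex at hab ⊢
      rw [hsortM a ha1 ha3, hsortM b hb1 hb3] at hab
      refine lex_of_append _ _ ?_ hab
      rw [Finset.length_sort, Finset.length_sort, Finset.card_erase_of_mem ha3,
        Finset.card_erase_of_mem hb3, ha2, hb2]
    -- identifications
    have idX : LX.map X = L1.map R := by
      rw [hLXdef, List.map_map]
      refine List.map_congr_left ?_
      intro s hs
      have hMs : M ∈ s := ((hmemL1 s).1 hs).2
      simp only [Function.comp, hXdef, Finset.insert_erase hMs]
    have idXr : LX.reverse.map X = L1.reverse.map R := by
      rw [List.map_reverse, List.map_reverse, idX]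
    -- apply the core lemma
    have hcore : (LX.reverse.map X).prod * (L0.map R).prod
        = (L0.map R).prod * (LX.map X).prod := by
      refine core m (Finset.Icc 1 K) X R R ?_ ?_ ?_ ?_ LX L0
        hmemLX hLXn hLXs hmemL0 hL0n hL0s
      · intro t s ht hs hct hcs hcond
        refine hcomm (insert M t) (insert M s) (hinsub t ht) (hinsub s hs)
          (hinscard t m ht hct) (hinscard s m hs hcs) ?_
        have h1 : insert M t ∩ insert M s = insert M (t ∩ s) := by
          ext x
          simp only [Finset.mem_inter, Finset.mem_insert]
          tauto
        rw [h1, Finset.card_insert_of_notMem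
          (fun h => hMnotK t ht (Finset.mem_inter.1 h).1)]
        omega
      · intro t u ht hu hct hcu hns
        have hcm : Commute (R (insert M t)) (R u) := by
          refine hcomm (insert M t) u (hinsub t ht) (hu.trans hKN')
            (hinscard t m ht hct) hcu ?_
          rw [Finset.insert_inter_of_notMem (hMnotK u hu)]
          have hss : t ∩ u ⊂ t := by
            refine Finset.ssubset_iff_subset_ne.2 ⟨Finset.inter_subset_left, ?_⟩
            intro he
            exact hns (Finset.inter_eq_left.1 he)
          have := Finset.card_lt_card hss
          omega
        exact ⟨hcm, hcm⟩
      · intro u v hu hv hcu hcv hcond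
        have hcm : Commute (R u) (R v) := by
          refine hcomm u v (hu.trans hKN') (hv.trans hKN') hcu hcv ?_
          omega
        exact ⟨hcm, hcm⟩
      · intro u hu hcu
        have hulM : ∀ a ∈ u, a < M := hltM' u hu
        have h := hsimp (insert M u) (hinsub u hu) (by rw [hinscard u (m + 1) hu hcu])
        rw [packetList_insert u M hulM] at h
        have hmap1 : ((u.sort (· ≤ ·)).map (fun a => insert M (u.erase a))).map R
            = (packetList u).map X := by
          unfold packetList
          rw [List.map_map, List.map_map]
          rfl
        rw [List.map_append, hmap1, List.reverse_append, List.reverse_singleton,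
          List.map_append] at h
        simp only [List.map_cons, List.map_nil, List.prod_append, List.prod_cons,
          List.prod_nil, mul_one, List.singleton_append] at h
        rw [List.map_reverse, hmap1] at h
        rw [List.map_reverse]
        exact h
    rw [idX, idXr] at hcore
    -- final assembly
    rw [eqL, eqLr, ← ih0]
    exact hcore.symm
end

section
/- In the group B(n,N), the lexicographically ordered product W(n,N) of all generators equals the colexicographically ordered product W'(n,N) of all generators, and moreover the equality can be established using only the commutativity relations (two generators commute when their index sets do not intersect in exactly n−1 elements). -/
def finsetColex (s t : Finset ℕ) : Prop :=
  List.Lex (· < ·) ((s.sort (· ≤ ·)).reverse) ((t.sort (· ≤ ·)).reverse)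

/-- prefix preservation of Lex -/
lemma lex_append_left {r : ℕ → ℕ → Prop} (u : List ℕ) {l₁ l₂ : List ℕ}
    (h : List.Lex r l₁ l₂) : List.Lex r (u ++ l₁) (u ++ l₂) := by
  induction u with
  | nil => simpa
  | cons a u ih => exact List.Lex.cons ih

lemma key_aux (X : Finset ℕ) (a b : ℕ) (ha : a ∉ X) (hb : b ∉ X) (hab : a < b) :
    finsetLex (insert a X) (insert b X) ∧ finsetColex (insert a X) (insert b X) := by
  classical
  set l : List ℕ := X.sort (· ≤ ·) with hl
  have hlsort : l.Pairwise (· < ·) := X.sortedLT_sort.pairwise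
  have hmem : ∀ x, x ∈ l ↔ x ∈ X := fun x => Finset.mem_sort _
  set u : List ℕ := l.filter (fun x => decide (x < a)) with hu
  set w : List ℕ := l.filter (fun x => decide (a < x ∧ x < b)) with hw
  set z : List ℕ := l.filter (fun x => decide (b < x)) with hz
  have hum : ∀ x, x ∈ u ↔ x ∈ X ∧ x < a := by
    intro x; simp [hu, List.mem_filter, hmem]
  have hwm : ∀ x, x ∈ w ↔ x ∈ X ∧ a < x ∧ x < b := by
    intro x; simp [hw, List.mem_filter, hmem]
  have hzm : ∀ x, x ∈ z ↔ x ∈ X ∧ b < x := by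
    intro x; simp [hz, List.mem_filter, hmem]
  have hus : u.Pairwise (· < ·) := hlsort.filter _
  have hws : w.Pairwise (· < ·) := hlsort.filter _
  have hzs : z.Pairwise (· < ·) := hlsort.filter _
  -- sorted decompositions
  have hsortS : (u ++ a :: (w ++ z)).Pairwise (· < ·) := by
    rw [List.pairwise_append]
    refine ⟨hus, ?_, ?_⟩
    · rw [List.pairwise_cons]
      refine ⟨?_, ?_⟩
      · intro y hy
        rcases List.mem_append.mp hy with hyw | hyz
        · exact ((hwm y).mp hyw).2.1
        · exact lt_trans hab ((hzm y).mp hyz).2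
      · rw [List.pairwise_append]
        refine ⟨hws, hzs, ?_⟩
        intro p hp q hq
        exact lt_trans ((hwm p).mp hp).2.2 ((hzm q).mp hq).2
    · intro p hp q hq
      have hpa : p < a := ((hum p).mp hp).2
      rcases List.mem_cons.mp hq with rfl | hq'
      · exact hpa
      rcases List.mem_append.mp hq' with hyw | hyz
      · exact lt_trans hpa ((hwm q).mp hyw).2.1
      · exact lt_trans hpa (lt_trans hab ((hzm q).mp hyz).2)
  have hsortT : ((u ++ w) ++ b :: z).Pairwise (· < ·) := by
    rw [List.pairwise_append]
    refine ⟨?_, ?_, ?_⟩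
    · 
      have : (u ++ w).Sublist (u ++ a :: (w ++ z)) := by
        refine List.Sublist.append (List.Sublist.refl u) ?_
        exact List.Sublist.trans (List.sublist_append_left w z) (List.sublist_cons_self _ _)
      exact hsortS.sublist this
    · rw [List.pairwise_cons]
      exact ⟨fun y hy => ((hzm y).mp hy).2, hzs⟩
    · intro p hp q hq
      have hpb : p < b := by
        rcases List.mem_append.mp hp with h1 | h2
        · exact lt_trans ((hum p).mp h1).2 hab
        · exact ((hwm p).mp h2).2.2
      rcases List.mem_cons.mp hq with rfl | hq'
      · exact hpb
      · exact lt_trans hpb ((hzm q).mp hq').2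
  have hanti : Std.Antisymm (α := ℕ) (· < ·) := ⟨fun _ _ h h' => absurd h' (not_lt_of_gt h)⟩
  -- identify the sorted lists
  have hS : (insert a X).sort (· ≤ ·) = u ++ a :: (w ++ z) := by
    apply List.Perm.eq_of_pairwise' (Finset.sortedLT_sort _).pairwise hsortS
    apply (List.perm_ext_iff_of_nodup (Finset.sort_nodup _ _) hsortS.nodup).mpr
    intro x
    simp only [Finset.mem_sort, Finset.mem_insert, List.mem_append, List.mem_cons,
      hum, hwm, hzm]
    constructor
    · rintro (rfl | hx)
      · exact Or.inr (Or.inl rfl)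
      · rcases lt_trichotomy x a with h1 | rfl | h1
        · exact Or.inl ⟨hx, h1⟩
        · exact absurd hx ha
        · rcases lt_trichotomy x b with h2 | rfl | h2
          · exact Or.inr (Or.inr (Or.inl ⟨hx, h1, h2⟩))
          · exact absurd hx hb
          · exact Or.inr (Or.inr (Or.inr ⟨hx, h2⟩))
    · rintro (⟨hx, _⟩ | rfl | ⟨hx, _⟩ | ⟨hx, _⟩)
      · exact Or.inr hx
      · exact Or.inl rfl
      · exact Or.inr hx
      · exact Or.inr hx
  have hT : (insert b X).sort (· ≤ ·) = (u ++ w) ++ b :: z := by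
    apply List.Perm.eq_of_pairwise' (Finset.sortedLT_sort _).pairwise hsortT
    apply (List.perm_ext_iff_of_nodup (Finset.sort_nodup _ _) hsortT.nodup).mpr
    intro x
    simp only [Finset.mem_sort, Finset.mem_insert, List.mem_append, List.mem_cons,
      hum, hwm, hzm]
    constructor
    · rintro (rfl | hx)
      · exact Or.inr (Or.inl rfl)
      · rcases lt_trichotomy x a with h1 | rfl | h1
        · exact Or.inl (Or.inl ⟨hx, h1⟩)
        · exact absurd hx ha
        · rcases lt_trichotomy x b with h2 | rfl | h2
          · exact Or.inl (Or.inr ⟨hx, h1, h2⟩)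
          · exact absurd hx hb
          · exact Or.inr (Or.inr ⟨hx, h2⟩)
    · rintro ((⟨hx, _⟩ | ⟨hx, _⟩) | rfl | ⟨hx, _⟩)
      · exact Or.inr hx
      · exact Or.inr hx
      · exact Or.inl rfl
      · exact Or.inr hx
  constructor
  · -- lex
    unfold finsetLex
    rw [hS, hT, List.append_assoc]
    apply lex_append_left
    cases hwc : w with
    | nil => simpa [hwc] using List.Lex.rel hab
    | cons c cs =>
      have hc : a < c := ((hwm c).mp (by simp [hwc])).2.1
      simpa [hwc] using List.Lex.rel hc
  · -- colex
    unfold finsetColex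
    rw [hS, hT]
    have e1 : (u ++ a :: (w ++ z)).reverse = z.reverse ++ (w.reverse ++ (a :: u.reverse)) := by
      simp
    have e2 : ((u ++ w) ++ b :: z).reverse = z.reverse ++ (b :: (w.reverse ++ u.reverse)) := by
      simp
    rw [e1, e2]
    apply lex_append_left
    cases hwc : w.reverse with
    | nil => simpa [hwc] using List.Lex.rel hab
    | cons c cs =>
      have hcw : c ∈ w := by
        have : c ∈ w.reverse := by simp [hwc]
        simpa using this
      have hc : c < b := ((hwm c).mp hcw).2.2
      simpa [hwc] using List.Lex.rel hc

/-- The group-theoretic sorting lemma. -/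
lemma sort_prod_eq {G : Type*} [Group G] (R : Finset ℕ → G) :
    ∀ (L L' : List (Finset ℕ)), L.Perm L' →
      L.Pairwise finsetLex → L'.Pairwise finsetColex → L'.Nodup →
      (∀ s ∈ L, ∀ t ∈ L, finsetLex s t → finsetColex t s → Commute (R s) (R t)) →
      (L.map R).prod = (L'.map R).prod := by
  intro L
  induction L with
  | nil =>
    intro L' hp _ _ _ _
    rw [hp.symm.eq_nil]
  | cons m L₀ ih =>
    intro L' hp hs hs' hnd' hcm
    have hm : m ∈ L' := hp.mem_iff.mp (by simp)
    obtain ⟨P, Q, rfl⟩ := List.append_of_mem hm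
    have hPnotm : m ∉ P := by
      have h := List.nodup_append'.mp hnd'
      intro hmP
      exact h.2.2 hmP (by simp)
    have hcomm : ∀ y ∈ P, Commute (R m) (R y) := by
      intro y hyP
      have hyL' : y ∈ P ++ m :: Q := by simp [hyP]
      have hym : y ≠ m := fun h => hPnotm (h ▸ hyP)
      have hyL : y ∈ m :: L₀ := hp.mem_iff.mpr hyL'
      have hyL₀ : y ∈ L₀ := by
        rcases List.mem_cons.mp hyL with h | h
        · exact absurd h hym
        · exact h
      have hlex : finsetLex m y := (List.pairwise_cons.mp hs).1 y hyL₀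
      have hcolex : finsetColex y m := by
        have := (List.pairwise_append.mp hs').2.2 y hyP m (by simp)
        exact this
      exact hcm m (by simp) y (by simp [hyL₀]) hlex hcolex
    have hmove : ((P ++ m :: Q).map R).prod = R m * (((P ++ Q)).map R).prod := by
      have hc : Commute (R m) ((P.map R).prod) := by
        apply Commute.list_prod_right
        intro x hx
        obtain ⟨y, hy, rfl⟩ := List.mem_map.mp hx
        exact hcomm y hy
      simp only [List.map_append, List.map_cons, List.prod_append, List.prod_cons]
      rw [← mul_assoc, ← hc.eq, mul_assoc]
    rw [hmove]
    have hperm : L₀.Perm (P ++ Q) := by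
      have h1 : (m :: L₀).Perm (m :: (P ++ Q)) := hp.trans List.perm_middle
      exact (List.perm_cons m).mp h1
    have hsub : (P ++ Q).Sublist (P ++ m :: Q) :=
      List.Sublist.append (List.Sublist.refl P) (List.sublist_cons_self _ _)
    have ihres := ih (P ++ Q) hperm (List.pairwise_cons.mp hs).2 (hs'.sublist hsub)
      (hnd'.sublist hsub)
      (fun s hsm t htm => hcm s (by simp [hsm]) t (by simp [htm]))
    simp only [List.map_cons, List.prod_cons, ihres]

/-- In `B(n,N)`, the lexicographically ordered product `W(n,N)` of all generators
equals the colexicographically ordered product `W'(n,N)`; moreover this holds using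
only the commutativity relations (two generators commute when their index sets do not
intersect in exactly `n-1` elements): the equality holds in any group whose elements
satisfy just those commutation relations. -/
theorem word_lex_eq_word_colex {G : Type*} [Group G] (n N : ℕ) (hn : 1 ≤ n) (hnN : n ≤ N)
    (R : Finset ℕ → G)
    (hcomm : ∀ s t : Finset ℕ, s ⊆ Finset.Icc 1 N → t ⊆ Finset.Icc 1 N →
      s.card = n → t.card = n → (s ∩ t).card ≠ n - 1 → R s * R t = R t * R s)
    (L L' : List (Finset ℕ))
    (hL : ∀ s : Finset ℕ, s ∈ L ↔ s ⊆ Finset.Icc 1 N ∧ s.card = n)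
    (hL' : ∀ s : Finset ℕ, s ∈ L' ↔ s ⊆ Finset.Icc 1 N ∧ s.card = n)
    (hsorted : L.Pairwise finsetLex) (hsorted' : L'.Pairwise finsetColex)
    (hnodup : L.Nodup) (hnodup' : L'.Nodup) :
    (L.map R).prod = (L'.map R).prod := by
  classical
  have hperm : L.Perm L' := by
    apply (List.perm_ext_iff_of_nodup hnodup hnodup').mpr
    intro s; rw [hL, hL']
  apply sort_prod_eq R L L' hperm hsorted hsorted' hnodup'
  intro s hsL t htL hlex hcolex
  obtain ⟨hsIcc, hscard⟩ := (hL s).mp hsL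
  obtain ⟨htIcc, htcard⟩ := (hL t).mp htL
  by_cases hint : (s ∩ t).card = n - 1
  · -- derive a contradiction from the key lemma
    exfalso
    have hst : s ≠ t := by
      rintro rfl
      rw [Finset.inter_self, hscard] at hint
      omega
    have h1 : (s ∩ t).card + (s \ t).card = s.card := Finset.card_inter_add_card_sdiff s t
    have h2 : (t ∩ s).card + (t \ s).card = t.card := Finset.card_inter_add_card_sdiff t s
    rw [Finset.inter_comm] at h2
    have hsd : (s \ t).card = 1 := by omega
    have htd : (t \ s).card = 1 := by omega
    obtain ⟨a, haeq⟩ := Finset.card_eq_one.mp hsd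
    obtain ⟨b, hbeq⟩ := Finset.card_eq_one.mp htd
    have ha : a ∈ s ∧ a ∉ t := by
      have : a ∈ s \ t := by rw [haeq]; simp
      simpa [Finset.mem_sdiff] using this
    have hb : b ∈ t ∧ b ∉ s := by
      have : b ∈ t \ s := by rw [hbeq]; simp
      simpa [Finset.mem_sdiff] using this
    have haX : a ∉ s ∩ t := by simp [Finset.mem_inter, ha.2]
    have hbX : b ∉ s ∩ t := by simp [Finset.mem_inter, hb.2]
    have hseq : s = insert a (s ∩ t) := by
      ext x
      simp only [Finset.mem_insert, Finset.mem_inter]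
      constructor
      · intro hx
        by_cases hxt : x ∈ t
        · exact Or.inr ⟨hx, hxt⟩
        · left
          have hxd : x ∈ s \ t := Finset.mem_sdiff.mpr ⟨hx, hxt⟩
          rw [haeq] at hxd; simpa using hxd
      · rintro (rfl | ⟨h1, _⟩)
        exacts [ha.1, h1]
    have hteq : t = insert b (s ∩ t) := by
      ext x
      simp only [Finset.mem_insert, Finset.mem_inter]
      constructor
      · intro hx
        by_cases hxs : x ∈ s
        · exact Or.inr ⟨hxs, hx⟩
        · left
          have hxd : x ∈ t \ s := Finset.mem_sdiff.mpr ⟨hx, hxs⟩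
          rw [hbeq] at hxd; simpa using hxd
      · rintro (rfl | ⟨_, h2⟩)
        exacts [hb.1, h2]
    have hab : a ≠ b := fun h => ha.2 (h ▸ hb.1)
    haveI : Std.Asymm (α := ℕ) (· < ·) := ⟨fun _ _ h h' => absurd h' (not_lt_of_gt h)⟩
    rcases lt_or_gt_of_ne hab with h | h
    · obtain ⟨_, hcx⟩ := key_aux (s ∩ t) a b haX hbX h
      rw [← hseq, ← hteq] at hcx
      exact (List.Lex.asymm (· < ·)).asymm _ _ hcx hcolex
    · obtain ⟨hlx, _⟩ := key_aux (s ∩ t) b a hbX haX h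
      rw [← hseq, ← hteq] at hlx
      exact (List.Lex.asymm (· < ·)).asymm _ _ hlx hlex
  · exact hcomm s t hsIcc htIcc hscard htcard hint
end

section
/- In the group B(n,N), the recursive factorization W(n,N) · ⌊W(n−1,N)⌋_{N+1} = W(n,N+1) holds in B(n,N+1), where ⌊·⌋_{N+1} replaces each generator R_{a1,...,a(n−1)} of B(n−1,N) by R_{a1,...,a(n−1),N+1}. -/
open List

open List in

/-- Products of permuted lists agree when every inverted pair commutes. -/
lemma prod_perm_of_comm {α G : Type*} [Group G] (f : α → G) :
    ∀ (l₁ l₂ : List α), l₁.Nodup → l₁ ~ l₂ →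
      (∀ x y, [x, y] <+ l₁ → [y, x] <+ l₂ → Commute (f x) (f y)) →
      (l₁.map f).prod = (l₂.map f).prod := by
  intro l₁
  induction l₁ with
  | nil => intro l₂ _ hp _; simp [hp.nil_eq]
  | cons a l ih =>
    intro l₂ hnd hp hc
    have ha : a ∈ l₂ := hp.mem_iff.mp (List.mem_cons_self (a := a) (l := l))
    obtain ⟨u, v, rfl⟩ := List.append_of_mem ha
    have hnd₂ : (u ++ a :: v).Nodup := hp.nodup hnd
    have hau : a ∉ u := by
      intro hau
      exact (List.disjoint_of_nodup_append hnd₂) hau (List.mem_cons_self (a := a) (l := v))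
    have hpl : l.Perm (u ++ v) := (hp.trans List.perm_middle).cons_inv
    have hcomm : ∀ b ∈ u, Commute (f a) (f b) := by
      intro b hb
      have hbl : b ∈ l := by
        have : b ∈ a :: l := hp.mem_iff.mpr (List.mem_append_left _ hb)
        rcases List.mem_cons.mp this with h | h
        · exact absurd (h ▸ hb) hau
        · exact h
      refine hc a b ?_ ?_
      · exact List.cons_sublist_cons.mpr (List.singleton_sublist.mpr hbl)
      · exact List.Sublist.append (List.singleton_sublist.mpr hb)
          (List.singleton_sublist.mpr (List.mem_cons_self (a := a) (l := v)))
    have hCom : Commute (f a) ((u.map f).prod) := by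
      apply Commute.list_prod_right
      intro x hx
      obtain ⟨b, hb, rfl⟩ := List.mem_map.mp hx
      exact hcomm b hb
    have hrec : (l.map f).prod = ((u ++ v).map f).prod := by
      refine ih (u ++ v) (List.Nodup.of_cons hnd) hpl ?_
      intro x y hx hy
      refine hc x y (hx.cons a) (hy.trans ?_)
      exact List.Sublist.append (List.Sublist.refl u) (List.sublist_cons_self a v)
    simp only [List.map_cons, List.map_append, List.prod_cons, List.prod_append]
    rw [hrec]
    simp only [List.map_append, List.prod_append]
    rw [← mul_assoc, hCom.eq, mul_assoc]

open List in
lemma lex_append_single {c : ℕ} : ∀ {l m : List ℕ}, List.Lex (· < ·) l m →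
    l.length = m.length → List.Lex (· < ·) (l ++ [c]) (m ++ [c]) := by
  intro l m h
  induction h with
  | nil => intro hlen; simp at hlen
  | rel h => intro _; exact List.Lex.rel h
  | cons _ ih => intro hlen; exact List.Lex.cons (ih (by simpa using hlen))

open List in
lemma lex_insert_lt (c : ℕ) : ∀ (l : List ℕ) (p : List ℕ) (w : ℕ), l.Pairwise (· < ·) →
    p.Pairwise (· < ·) → p.Perm (w :: l) → w < c → (∀ a ∈ l, a < c) →
    List.Lex (· < ·) p (l ++ [c]) := by
  intro l
  induction l with
  | nil =>
    intro p w _ _ hp hwc _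
    have : p = [w] := List.Perm.eq_singleton hp  -- maybe wrong name
    subst this
    exact List.Lex.rel hwc
  | cons a l' ih =>
    intro p w hl hps hp hwc hlt
    match p, hps with
    | [], _ => exact absurd hp.length_eq (by simp)
    | h :: p', hps =>
      have hnd : (h :: p').Nodup := hps.nodup  -- Sorted (<) → Nodup?
      have hndw : (w :: a :: l').Nodup := hp.nodup hnd
      have hwa : w ≠ a := by
        intro he; exact (List.nodup_cons.mp hndw).1 (he ▸ List.mem_cons_self (a := a) (l := l'))
      by_cases hhw : h = w
      · subst hhw
        have hal : a ∈ h :: p' := hp.mem_iff.mpr (by simp)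
        have hha : h < a := by
          rcases List.mem_cons.mp hal with he | hm
          · exact absurd he.symm hwa
          · exact List.rel_of_pairwise_cons hps hm
        exact List.Lex.rel hha
      · have hhmem : h ∈ w :: a :: l' := hp.mem_iff.mp (List.mem_cons_self (a := h) (l := p'))
        have hh2 : h ∈ a :: l' := by
          rcases List.mem_cons.mp hhmem with he | hm
          · exact absurd he hhw
          · exact hm
        have hamem : a ∈ h :: p' := hp.mem_iff.mpr (by simp)
        have hha : h = a := by
          rcases List.mem_cons.mp hh2 with he | hm
          · exact he
          · -- h ∈ l', so a < h; but a ∈ h :: p' gives h ≤ a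
            have h1 : a < h := List.rel_of_pairwise_cons hl hm
            rcases List.mem_cons.mp hamem with he | hm'
            · exact he.symm
            · exact absurd (List.rel_of_pairwise_cons hps hm') (lt_asymm h1)
        subst hha
        have hp' : p'.Perm (w :: l') := by
          have h1 : (h :: p').Perm (h :: w :: l') :=
            hp.trans (List.Perm.swap h w l')
          exact h1.cons_inv
        exact List.Lex.cons (ih p' w hl.of_cons hps.of_cons hp' hwc
          (fun b hb => hlt b (List.mem_cons_of_mem h hb)))

open List in
lemma lex_asymm' {p q : List ℕ} (h1 : List.Lex (· < ·) p q) (h2 : List.Lex (· < ·) q p) : False :=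
  (List.Lex.asymm (· < ·)).asymm p q h1 h2

lemma sort_insert_top {c : ℕ} {s : Finset ℕ} (hc : c ∉ s) (h : ∀ a ∈ s, a ≤ c) :
    (insert c s).sort (· ≤ ·) = s.sort (· ≤ ·) ++ [c] := by
  refine (fun hp h1 h2 => List.Perm.eq_of_pairwise' (r := (· ≤ ·)) h1 h2 hp) ?_ ?_ ?_
  · calc (insert c s).sort (· ≤ ·) ~ (insert c s).toList := Finset.sort_perm_toList _ _
    _ ~ c :: s.toList := Finset.toList_insert hc
    _ ~ c :: s.sort (· ≤ ·) := List.Perm.cons c (Finset.sort_perm_toList _ _).symm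
    _ ~ s.sort (· ≤ ·) ++ [c] := (List.perm_append_singleton c _).symm
  · exact Finset.pairwise_sort _ _
  · rw [List.pairwise_append]
    refine ⟨Finset.pairwise_sort _ _, List.pairwise_singleton _ c, ?_⟩
    intro a ha b hb
    rw [List.mem_singleton] at hb
    subst hb
    exact h a ((Finset.mem_sort _).mp ha)

/-- key fact: insert w t <lex insert c t when w < c etc. -/
lemma finsetLex_insert_insert {c w : ℕ} {t : Finset ℕ} (hw : w ∉ t) (hc : c ∉ t)
    (hwc : w < c) (hlt : ∀ a ∈ t, a < c) :
    finsetLex (insert w t) (insert c t) := by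
  unfold finsetLex
  rw [sort_insert_top hc (fun a ha => le_of_lt (hlt a ha))]
  refine lex_insert_lt c (t.sort (· ≤ ·)) _ w (Finset.sortedLT_sort t).pairwise
    (Finset.sortedLT_sort _).pairwise ?_ hwc ?_
  · calc ((insert w t).sort (· ≤ ·)).Perm ((insert w t).toList) := Finset.sort_perm_toList _ _
    _ ~ w :: t.toList := Finset.toList_insert hw
    _ ~ w :: t.sort (· ≤ ·) := List.Perm.cons w (Finset.sort_perm_toList _ _).symm
  · intro a ha; exact hlt a ((Finset.mem_sort _).mp ha)

lemma finsetLex_map_insert {c : ℕ} {s t : Finset ℕ} (hs : c ∉ s) (ht : c ∉ t)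
    (hls : ∀ a ∈ s, a ≤ c) (hlt : ∀ a ∈ t, a ≤ c) (hcard : s.card = t.card)
    (h : finsetLex s t) : finsetLex (insert c s) (insert c t) := by
  unfold finsetLex at h ⊢
  rw [sort_insert_top hs hls, sort_insert_top ht hlt]
  exact lex_append_single h (by rw [Finset.length_sort, Finset.length_sort, hcard])

/-- The recursive factorization `W(n,N) · ⌊W(n-1,N)⌋_{N+1} = W(n,N+1)` in `B(n,N+1)`:
here `R` satisfies the commutativity and `n`-simplex relations of `B(n,N+1)`, `L1` is
the lex-ordered list of `n`-subsets of `{1,…,N}`, `L2` the lex-ordered list of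
`(n-1)`-subsets of `{1,…,N}` (each generator getting the extra index `N+1`), and `L3`
the lex-ordered list of `n`-subsets of `{1,…,N+1}`. -/
theorem word_recursion {G : Type*} [Group G] (n N : ℕ) (hn : 1 ≤ n) (hnN : n ≤ N)
    (R : Finset ℕ → G)
    (hcomm : ∀ s t : Finset ℕ, s ⊆ Finset.Icc 1 (N + 1) → t ⊆ Finset.Icc 1 (N + 1) →
      s.card = n → t.card = n → (s ∩ t).card ≠ n - 1 → R s * R t = R t * R s)
    (hsimplex : ∀ u : Finset ℕ, u ⊆ Finset.Icc 1 (N + 1) → u.card = n + 1 →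
      ((u.sort (· ≤ ·)).map fun a => R (u.erase a)).prod =
        ((u.sort (· ≤ ·)).reverse.map fun a => R (u.erase a)).prod)
    (L1 L2 L3 : List (Finset ℕ))
    (hL1 : ∀ s : Finset ℕ, s ∈ L1 ↔ s ⊆ Finset.Icc 1 N ∧ s.card = n)
    (hL2 : ∀ s : Finset ℕ, s ∈ L2 ↔ s ⊆ Finset.Icc 1 N ∧ s.card = n - 1)
    (hL3 : ∀ s : Finset ℕ, s ∈ L3 ↔ s ⊆ Finset.Icc 1 (N + 1) ∧ s.card = n)
    (h1 : L1.Pairwise finsetLex) (h2 : L2.Pairwise finsetLex) (h3 : L3.Pairwise finsetLex)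
    (hd1 : L1.Nodup) (hd2 : L2.Nodup) (hd3 : L3.Nodup) :
    (L1.map R).prod * (L2.map fun s => R (insert (N + 1) s)).prod = (L3.map R).prod := by
  classical
  set g : Finset ℕ → Finset ℕ := insert (N + 1) with hg
  -- basic facts
  have hNIcc : (N + 1) ∉ Finset.Icc 1 N := by simp
  have hnot1 : ∀ s ∈ L1, (N + 1) ∉ s := fun s hs hmem => hNIcc (((hL1 s).mp hs).1 hmem)
  have hnot2 : ∀ s ∈ L2, (N + 1) ∉ s := fun s hs hmem => hNIcc (((hL2 s).mp hs).1 hmem)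
  set L : List (Finset ℕ) := L1 ++ L2.map g with hL
  -- nodup of L
  have hd2' : (L2.map g).Nodup := by
    refine List.Nodup.map_on ?_ hd2
    intro s hs t ht he
    have : (g s).erase (N + 1) = (g t).erase (N + 1) := by rw [he]
    rwa [hg, Finset.erase_insert (hnot2 s hs), Finset.erase_insert (hnot2 t ht)] at this
  have hdisj : ∀ s ∈ L1, s ∉ L2.map g := by
    intro s hs hmem
    obtain ⟨t, _, rfl⟩ := List.mem_map.mp hmem
    exact hnot1 _ hs (Finset.mem_insert_self _ _)
  have hndL : L.Nodup := by
    rw [hL, List.nodup_append]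
    exact ⟨hd1, hd2', fun s hs b hb he => hdisj s hs (he ▸ hb)⟩
  -- membership characterization of L
  have hmemL : ∀ s : Finset ℕ, s ∈ L ↔ s ∈ L3 := by
    intro s
    rw [hL, List.mem_append, hL3 s]
    constructor
    · rintro (hs | hs)
      · obtain ⟨hsub, hcard⟩ := (hL1 s).mp hs
        exact ⟨hsub.trans (Finset.Icc_subset_Icc_right (Nat.le_succ N)), hcard⟩
      · obtain ⟨t, ht, rfl⟩ := List.mem_map.mp hs
        obtain ⟨hsub, hcard⟩ := (hL2 t).mp ht
        constructor
        · rw [hg]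
          refine Finset.insert_subset (Finset.mem_Icc.mpr ⟨Nat.le_add_left 1 N, le_refl _⟩) ?_
          exact hsub.trans (Finset.Icc_subset_Icc_right (Nat.le_succ N))
        · rw [hg, Finset.card_insert_of_notMem (fun hm => hNIcc (hsub hm)), hcard]
          omega
    · rintro ⟨hsub, hcard⟩
      by_cases hN : (N + 1) ∈ s
      · right
        refine List.mem_map.mpr ⟨s.erase (N + 1), (hL2 _).mpr ⟨?_, ?_⟩, ?_⟩
        · intro a ha
          have h1 := Finset.mem_Icc.mp (hsub (Finset.mem_of_mem_erase ha))
          have h2 := Finset.ne_of_mem_erase ha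
          exact Finset.mem_Icc.mpr ⟨h1.1, by omega⟩
        · rw [Finset.card_erase_of_mem hN, hcard]
        · rw [hg, Finset.insert_erase hN]
      · left
        refine (hL1 s).mpr ⟨?_, hcard⟩
        intro a ha
        have h1 := Finset.mem_Icc.mp (hsub ha)
        have h2 : a ≠ N + 1 := fun he => hN (he ▸ ha)
        exact Finset.mem_Icc.mpr ⟨h1.1, by omega⟩
  have hperm : L.Perm L3 := (List.perm_ext_iff_of_nodup hndL hd3).mpr hmemL
  -- the main computation
  have main : (L.map R).prod = (L3.map R).prod := by
    refine prod_perm_of_comm R L L3 hndL hperm ?_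
    intro x y hxy hyx
    -- from L3 sorted: finsetLex y x
    have hyx_lex : finsetLex y x := by
      have hp : List.Pairwise finsetLex [y, x] := List.Pairwise.sublist hyx h3
      exact (List.pairwise_cons.mp hp).1 x (List.mem_singleton_self x)
    -- decompose the sublist of the append
    obtain ⟨u', v', huv, hu, hv⟩ := List.sublist_append_iff.mp hxy
    rcases u' with _ | ⟨a, u''⟩
    · -- [x, y] <+ L2.map g
      simp only [List.nil_append] at huv
      subst huv
      obtain ⟨l', hl', hmap⟩ := List.sublist_map_iff.mp hv
      match l', hmap with
      | [s, t], hmap =>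
        have hmap' : x = g s ∧ y = g t := by
          have := hmap
          simp only [List.map_cons, List.map_nil, List.cons.injEq, and_true] at this
          exact ⟨this.1, this.2⟩
        obtain ⟨hsx, hty⟩ := hmap'
        have hs2 : s ∈ L2 := hl'.subset (by simp)
        have ht2 : t ∈ L2 := hl'.subset (by simp)
        have hst : finsetLex s t := by
          have hp : List.Pairwise finsetLex [s, t] := List.Pairwise.sublist hl' h2
          exact (List.pairwise_cons.mp hp).1 t (List.mem_singleton_self t)
        have hxy_lex : finsetLex x y := by
          rw [hsx, hty, hg]
          refine finsetLex_map_insert (hnot2 s hs2) (hnot2 t ht2) ?_ ?_ ?_ hst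
          · intro a ha
            exact (Finset.mem_Icc.mp (((hL2 s).mp hs2).1 ha)).2.trans (Nat.le_succ N)
          · intro a ha
            exact (Finset.mem_Icc.mp (((hL2 t).mp ht2).1 ha)).2.trans (Nat.le_succ N)
          · rw [((hL2 s).mp hs2).2, ((hL2 t).mp ht2).2]
        exact absurd hxy_lex (fun h => lex_asymm' h hyx_lex)
    · rcases u'' with _ | ⟨b, u'''⟩
      · -- x ∈ L1, y ∈ L2.map g : the real case
        obtain ⟨hax, hvy⟩ : x = a ∧ [y] = v' := by
          simpa using huv
        have hx1 : x ∈ L1 := by rw [hax]; exact hu.subset (by simp)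
        have hv' : [y] <+ L2.map g := by rw [hvy]; exact hv
        obtain ⟨t, ht2, hty⟩ := List.mem_map.mp (hv'.subset (List.mem_singleton_self y))
        obtain ⟨hxsub, hxcard⟩ := (hL1 x).mp hx1
        obtain ⟨htsub, htcard⟩ := (hL2 t).mp ht2
        have hNx : (N + 1) ∉ x := hnot1 x hx1
        have hNt : (N + 1) ∉ t := hnot2 t ht2
        -- show the intersection is small, hence they commute
        have hcard_ne : (x ∩ y).card ≠ n - 1 := by
          intro hcard
          rw [← hty, hg, Finset.inter_insert_of_notMem hNx] at hcard
          have hint : x ∩ t = t :=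
            Finset.eq_of_subset_of_card_le Finset.inter_subset_right (by rw [hcard, htcard])
          have htx : t ⊆ x := by
            intro a hat
            rw [← hint] at hat
            exact (Finset.mem_inter.mp hat).1
          have hcard1 : (x \ t).card = 1 := by
            rw [Finset.card_sdiff_of_subset htx, hxcard, htcard]; omega
          obtain ⟨w, hw⟩ := Finset.card_eq_one.mp hcard1
          have hwx : w ∈ x \ t := hw ▸ Finset.mem_singleton_self w
          have hxeq : x = insert w t := by
            rw [Finset.insert_eq, Finset.union_comm, ← hw, Finset.union_sdiff_of_subset htx]
          have hwt : w ∉ t := (Finset.mem_sdiff.mp hwx).2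
          have hwN : w < N + 1 := by
            have := (Finset.mem_Icc.mp (hxsub (Finset.mem_sdiff.mp hwx).1)).2
            omega
          have hlex : finsetLex x y := by
            rw [hxeq, ← hty, hg]
            refine finsetLex_insert_insert hwt hNt hwN ?_
            intro a ha
            have := (Finset.mem_Icc.mp (htsub ha)).2
            omega
          exact lex_asymm' hlex hyx_lex
        have hxL3 : x ⊆ Finset.Icc 1 (N + 1) :=
          hxsub.trans (Finset.Icc_subset_Icc_right (Nat.le_succ N))
        have hyL3 : y ⊆ Finset.Icc 1 (N + 1) ∧ y.card = n :=
          (hL3 y).mp ((hmemL y).mp (by rw [hL, List.mem_append]; right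
                                       exact List.mem_map.mpr ⟨t, ht2, hty⟩))
        exact hcomm x y hxL3 hyL3.1 hxcard hyL3.2 hcard_ne
      · -- [x, y] <+ L1
        have hxy1 : [x, y] <+ L1 := by
          have hlen := congrArg List.length huv
          simp only [List.length_cons, List.length_append, List.length_nil] at hlen
          have h1' : u''' = [] := List.eq_nil_of_length_eq_zero (by omega)
          have h2' : v' = [] := List.eq_nil_of_length_eq_zero (by omega)
          subst h1'; subst h2'
          simp only [List.append_nil] at huv
          rw [huv]
          exact hu
        have hxy_lex : finsetLex x y := by
          have hp : List.Pairwise finsetLex [x, y] := List.Pairwise.sublist hxy1 h1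
          exact (List.pairwise_cons.mp hp).1 y (List.mem_singleton_self y)
        exact absurd hxy_lex (fun h => lex_asymm' h hyx_lex)
  -- conclude
  calc (L1.map R).prod * (L2.map fun s => R (insert (N + 1) s)).prod
      = (L.map R).prod := by
        rw [hL, List.map_append, List.prod_append]
        congr 1
        rw [hg, List.map_map]
        rfl
    _ = (L3.map R).prod := main
end

section
/- Let B be the incidence matrix of the triangular quiver Q_N, viewed as a skew-symmetric integer matrix indexed by vertices (i,j), 1 ≤ i < j ≤ N. If α ∈ ℤ^{N(N−1)/2} satisfies Bα = 0, then the weights of α are invariant under the rotation and reflection symmetries of the quiver: α_{ij} = α_{j−i,N+1−i} = α_{j−i,j} = α_{N+1−j,N+1−i} = α_{i,N+1+i−j} for all 1 ≤ i < j ≤ N. -/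
/-- Entry `B_{v,w}` of the skew-symmetric incidence matrix of the triangular quiver
`Q_N`: edges go `(i,j)→(i,j+1)`, `(i,j)→(i+1,j)` and `(i+1,j+1)→(i,j)`. -/
def Bfun (v w : ℕ × ℕ) : ℤ :=
  if (w = (v.1, v.2 + 1) ∨ w = (v.1 + 1, v.2) ∨ v = (w.1 + 1, w.2 + 1)) then 1
  else if (v = (w.1, w.2 + 1) ∨ v = (w.1 + 1, w.2) ∨ w = (v.1 + 1, v.2 + 1)) then -1
  else 0

/-- The vertex set of the quiver `Q_N`: pairs `(i,j)` with `1 ≤ i < j ≤ N`. -/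
def vertexSet (N : ℕ) : Finset (ℕ × ℕ) :=
  (Finset.Icc 1 N ×ˢ Finset.Icc 1 N).filter fun p => p.1 < p.2

lemma mem_vertexSet {N : ℕ} {p : ℕ × ℕ} :
    p ∈ vertexSet N ↔ 1 ≤ p.1 ∧ p.1 ≤ N ∧ 1 ≤ p.2 ∧ p.2 ≤ N ∧ p.1 < p.2 := by
  simp only [vertexSet, Finset.mem_filter, Finset.mem_product, Finset.mem_Icc]
  tauto

/-- Extension of `α` by zero outside the vertex set. -/
def ab (N : ℕ) (α : ℕ × ℕ → ℤ) (p : ℕ × ℕ) : ℤ :=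
  if p ∈ vertexSet N then α p else 0

lemma ab_eq {N : ℕ} {α : ℕ × ℕ → ℤ} {p : ℕ × ℕ} (h : p ∈ vertexSet N) :
    ab N α p = α p := if_pos h

lemma ab_zero {N : ℕ} {α : ℕ × ℕ → ℤ} {p : ℕ × ℕ} (h : p ∉ vertexSet N) :
    ab N α p = 0 := if_neg h

/-- The local kernel relation, in terms of the zero-extension. -/
lemma relR (N : ℕ) (α : ℕ × ℕ → ℤ)
    (hker : ∀ v ∈ vertexSet N, ∑ w ∈ vertexSet N, Bfun v w * α w = 0)
    (i j : ℕ) (hi : 1 ≤ i) (hij : i < j) (hj : j ≤ N) :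
    ab N α (i, j+1) + ab N α (i+1, j) + ab N α (i-1, j-1)
      = ab N α (i, j-1) + ab N α (i-1, j) + ab N α (i+1, j+1) := by
  have hv : (i, j) ∈ vertexSet N := mem_vertexSet.mpr ⟨hi, by omega, by omega, hj, hij⟩
  have h0 := hker (i, j) hv
  set T : Finset (ℕ × ℕ) :=
    {(i, j+1), (i+1, j), (i-1, j-1), (i, j-1), (i-1, j), (i+1, j+1)} with hT
  have hBzero : ∀ w : ℕ × ℕ, w ∉ T → Bfun (i, j) w = 0 := by
    rintro ⟨a, b⟩ hw
    simp only [hT, Finset.mem_insert, Finset.mem_singleton, Prod.mk.injEq, not_or] at hw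
    simp only [Bfun, Prod.mk.injEq]
    rw [if_neg (by omega), if_neg (by omega)]
  have habzero : ∀ w : ℕ × ℕ, w ∉ vertexSet N → ab N α w = 0 := fun w hw => ab_zero hw
  have e1 : ∑ w ∈ vertexSet N, Bfun (i, j) w * α w
      = ∑ w ∈ vertexSet N, Bfun (i, j) w * ab N α w :=
    Finset.sum_congr rfl fun w hw => by rw [ab_eq hw]
  have e2 : ∑ w ∈ vertexSet N, Bfun (i, j) w * ab N α w
      = ∑ w ∈ vertexSet N ∪ T, Bfun (i, j) w * ab N α w :=
    Finset.sum_subset Finset.subset_union_left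
      (fun w _ hw => by rw [habzero w hw, mul_zero])
  have e3 : ∑ w ∈ T, Bfun (i, j) w * ab N α w
      = ∑ w ∈ vertexSet N ∪ T, Bfun (i, j) w * ab N α w :=
    Finset.sum_subset Finset.subset_union_right
      (fun w _ hw => by rw [hBzero w hw, zero_mul])
  have hB1 : Bfun (i, j) (i, j+1) = 1 := by
    unfold Bfun; rw [if_pos (Or.inl rfl)]
  have hB2 : Bfun (i, j) (i+1, j) = 1 := by
    unfold Bfun; rw [if_pos (Or.inr (Or.inl rfl))]
  have hB3 : Bfun (i, j) (i-1, j-1) = 1 := by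
    unfold Bfun
    rw [if_pos (Or.inr (Or.inr (show ((i:ℕ), j) = ((i-1:ℕ)+1, (j-1:ℕ)+1) by
      rw [show (i-1)+1 = i from by omega, show (j-1)+1 = j from by omega])))]
  have hB4 : Bfun (i, j) (i, j-1) = -1 := by
    have c : ((i:ℕ), j) = ((i, j-1).1, (i, j-1).2 + 1) := by
      show ((i:ℕ), j) = (i, j-1+1)
      rw [show (j-1)+1 = j from by omega]
    unfold Bfun
    rw [if_neg (by simp only [Prod.mk.injEq]; omega), if_pos (Or.inl c)]
  have hB5 : Bfun (i, j) (i-1, j) = -1 := by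
    have c : ((i:ℕ), j) = ((i-1, j).1 + 1, (i-1, j).2) := by
      show ((i:ℕ), j) = (i-1+1, j)
      rw [show (i-1)+1 = i from by omega]
    unfold Bfun
    rw [if_neg (by simp only [Prod.mk.injEq]; omega), if_pos (Or.inr (Or.inl c))]
  have hB6 : Bfun (i, j) (i+1, j+1) = -1 := by
    unfold Bfun
    rw [if_neg (by simp only [Prod.mk.injEq]; omega),
      if_pos (Or.inr (Or.inr rfl))]
  have hTsum : ∑ w ∈ T, Bfun (i, j) w * ab N α w
      = ab N α (i, j+1) + ab N α (i+1, j) + ab N α (i-1, j-1)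
        - ab N α (i, j-1) - ab N α (i-1, j) - ab N α (i+1, j+1) := by
    rw [hT]
    rw [Finset.sum_insert (by
        simp only [Finset.mem_insert, Finset.mem_singleton, Prod.mk.injEq]; omega),
      Finset.sum_insert (by
        simp only [Finset.mem_insert, Finset.mem_singleton, Prod.mk.injEq]; omega),
      Finset.sum_insert (by
        simp only [Finset.mem_insert, Finset.mem_singleton, Prod.mk.injEq]; omega),
      Finset.sum_insert (by
        simp only [Finset.mem_insert, Finset.mem_singleton, Prod.mk.injEq]; omega),
      Finset.sum_insert (by
        simp only [Finset.mem_singleton, Prod.mk.injEq]; omega),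
      Finset.sum_singleton]
    rw [hB1, hB2, hB3, hB4, hB5, hB6]
    ring
  have : ab N α (i, j+1) + ab N α (i+1, j) + ab N α (i-1, j-1)
        - ab N α (i, j-1) - ab N α (i-1, j) - ab N α (i+1, j+1) = 0 := by
    rw [← hTsum, e3, ← e2, ← e1, h0]
  linarith

/-- The diagonal difference formula `ᾱ(i,m) - ᾱ(i-1,m-1) = ᾱ(1,m) - ᾱ(1,i)`. -/
lemma lemA (N : ℕ) (α : ℕ × ℕ → ℤ)
    (hker : ∀ v ∈ vertexSet N, ∑ w ∈ vertexSet N, Bfun v w * α w = 0) :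
    ∀ k i m, i + m ≤ k → 1 ≤ i → i ≤ m → m ≤ N + 1 →
      ab N α (i, m) - ab N α (i-1, m-1) = ab N α (1, m) - ab N α (1, i) := by
  intro k
  induction k with
  | zero => intro i m hk h1; omega
  | succ k ih =>
    intro i m hk h1 h2 h3
    rcases eq_or_lt_of_le h1 with h1' | h1'
    · -- i = 1
      have hz1 : ab N α (0, m-1) = 0 := ab_zero (by
        simp only [mem_vertexSet]; omega)
      have hz2 : ab N α (1, 1) = 0 := ab_zero (by
        simp only [mem_vertexSet]; omega)
      rw [← h1']
      rw [show (1:ℕ) - 1 = 0 from rfl, hz1, hz2]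
    rcases eq_or_lt_of_le h2 with h2' | h2'
    · -- i = m
      subst h2'
      have hz1 : ab N α (i, i) = 0 := ab_zero (by simp only [mem_vertexSet]; omega)
      have hz2 : ab N α (i-1, i-1) = 0 := ab_zero (by simp only [mem_vertexSet]; omega)
      rw [hz1, hz2]; ring
    -- 2 ≤ i < m
    have R := relR N α hker (i-1) (m-1) (by omega) (by omega) (by omega)
    rw [show i-1+1 = i from by omega, show m-1+1 = m from by omega,
      show i-1-1 = i-2 from by omega, show m-1-1 = m-2 from by omega] at R
    have ih1 := ih (i-1) m (by omega) (by omega) (by omega) h3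
    rw [show i-1-1 = i-2 from by omega] at ih1
    have ih2 := ih i (m-1) (by omega) (by omega) (by omega) (by omega)
    rw [show m-1-1 = m-2 from by omega] at ih2
    have ih3 := ih (i-1) (m-1) (by omega) (by omega) (by omega) (by omega)
    rw [show i-1-1 = i-2 from by omega, show m-1-1 = m-2 from by omega] at ih3
    linarith

/-- Partial sums of the first row: `C(k) = Σ_{s ≤ k} ᾱ(1,s)`. -/
def Csum (N : ℕ) (α : ℕ × ℕ → ℤ) (k : ℕ) : ℤ :=
  ∑ s ∈ Finset.range (k+1), ab N α (1, s)

lemma Csum_succ (N : ℕ) (α : ℕ × ℕ → ℤ) (k : ℕ) :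
    Csum N α (k+1) = Csum N α k + ab N α (1, k+1) :=
  Finset.sum_range_succ _ _

lemma lemB (N : ℕ) (α : ℕ × ℕ → ℤ)
    (hker : ∀ v ∈ vertexSet N, ∑ w ∈ vertexSet N, Bfun v w * α w = 0) :
    ∀ i m, i ≤ m → m ≤ N + 1 →
      ab N α (i, m) = Csum N α m - Csum N α (m - i) - Csum N α i := by
  intro i
  induction i with
  | zero =>
    intro m _ _
    have hz : ab N α (0, m) = 0 := ab_zero (by simp only [mem_vertexSet]; omega)
    have hC0 : Csum N α 0 = 0 := by
      have : ab N α (1, 0) = 0 := ab_zero (by simp only [mem_vertexSet]; omega)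
      simp [Csum, this]
    rw [hz, Nat.sub_zero, hC0]; ring
  | succ i ih =>
    intro m h1 h2
    obtain ⟨m', rfl⟩ : ∃ m', m = m' + 1 := ⟨m - 1, by omega⟩
    have hA := lemA N α hker (i + 1 + (m' + 1)) (i+1) (m'+1) le_rfl (by omega) h1 h2
    rw [show i+1-1 = i from rfl, show m'+1-1 = m' from rfl] at hA
    have hB := ih m' (by omega) (by omega)
    rw [show m'+1-(i+1) = m'-i from by omega, Csum_succ, Csum_succ]
    linarith

lemma lemC (N : ℕ) (α : ℕ × ℕ → ℤ)
    (hker : ∀ v ∈ vertexSet N, ∑ w ∈ vertexSet N, Bfun v w * α w = 0) :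
    ∀ i, 1 ≤ i → i ≤ N + 1 → Csum N α i + Csum N α (N + 1 - i) = Csum N α N := by
  intro i h1 h2
  have hB := lemB N α hker i (N+1) h2 le_rfl
  have h0 : ab N α (i, N+1) = 0 := ab_zero (by simp only [mem_vertexSet]; omega)
  have hC : Csum N α (N+1) = Csum N α N := by
    have hz : ab N α (1, N+1) = 0 := ab_zero (by simp only [mem_vertexSet]; omega)
    rw [Csum_succ, hz, add_zero]
  rw [h0, hC] at hB
  linarith

/-- An integer vector in the kernel of the incidence matrix of `Q_N` is invariant
under the rotation and reflection symmetries of the quiver: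
`α_{ij} = α_{j-i,N+1-i} = α_{j-i,j} = α_{N+1-j,N+1-i} = α_{i,N+1+i-j}`. -/
theorem ker_B_symmetric (N : ℕ) (hN : 2 ≤ N) (α : ℕ × ℕ → ℤ)
    (hker : ∀ v ∈ vertexSet N, ∑ w ∈ vertexSet N, Bfun v w * α w = 0) :
    ∀ i j : ℕ, 1 ≤ i → i < j → j ≤ N →
      α (i, j) = α (j - i, N + 1 - i) ∧
      α (i, j) = α (j - i, j) ∧
      α (i, j) = α (N + 1 - j, N + 1 - i) ∧
      α (i, j) = α (i, N + 1 + i - j) := by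
  intro i j hi hij hj
  have key : ∀ a b : ℕ, 1 ≤ a → a < b → b ≤ N →
      α (a, b) = Csum N α b - Csum N α (b - a) - Csum N α a := by
    intro a b ha hab hb
    have h := lemB N α hker a b hab.le (by omega)
    rwa [ab_eq (mem_vertexSet.mpr ⟨ha, by omega, by omega, hb, hab⟩)] at h
  have e0 := key i j hi hij hj
  have e1 := key (j-i) (N+1-i) (by omega) (by omega) (by omega)
  rw [show (N+1-i)-(j-i) = N+1-j from by omega] at e1
  have e2 := key (j-i) j (by omega) (by omega) hj
  rw [show j-(j-i) = i from by omega] at e2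
  have e3 := key (N+1-j) (N+1-i) (by omega) (by omega) (by omega)
  rw [show (N+1-i)-(N+1-j) = j-i from by omega] at e3
  have e4 := key i (N+1+i-j) hi (by omega) (by omega)
  rw [show (N+1+i-j)-i = N+1-j from by omega] at e4
  have c1 := lemC N α hker i hi (by omega)
  have c2 := lemC N α hker j (by omega) (by omega)
  have c3 := lemC N α hker (j-i) (by omega) (by omega)
  rw [show N+1-(j-i) = N+1+i-j from by omega] at c3
  exact ⟨by linarith, by linarith, by linarith, by linarith⟩
end

section
/- The dimension of the kernel of the incidence matrix B of the triangular quiver Q_N (over ℚ) equals N/2 if N is even and (N−1)/2 if N is odd. Equivalently, the center of the quantum torus T_N has dimension χ(N) = ⌊N/2⌋ if N is even and (N−1)/2 if N is odd, i.e., χ(N) = ⌊N/2⌋ for even N and ⌊(N−1)/2⌋ for odd N. -/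
/-- Vertices of `Q_N` as a finite type: pairs `(i,j)` with `1 ≤ i < j ≤ N`. -/
abbrev VIdx (N : ℕ) :=
  {p : Fin (N + 1) × Fin (N + 1) // 1 ≤ p.1.val ∧ p.1.val < p.2.val ∧ p.2.val ≤ N}

/-- The incidence matrix of `Q_N` as a rational matrix. -/
def Bmat (N : ℕ) : Matrix (VIdx N) (VIdx N) ℚ :=
  fun v w => (Bfun (v.val.1.val, v.val.2.val) (w.val.1.val, w.val.2.val) : ℚ)

namespace QT
variable (N : ℕ)

def mkV (i j : ℤ) (h : 1 ≤ i ∧ i < j ∧ j ≤ N) : VIdx N :=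
  ⟨(⟨i.toNat, by omega⟩, ⟨j.toNat, by omega⟩), by simp; omega⟩

def extz (x : VIdx N → ℚ) (i j : ℤ) : ℚ :=
  if h : 1 ≤ i ∧ i < j ∧ j ≤ N then x (mkV N i j h) else 0

lemma extz_valid (x : VIdx N → ℚ) (i j : ℤ) (h : 1 ≤ i ∧ i < j ∧ j ≤ N) :
    extz N x i j = x (mkV N i j h) := dif_pos h

lemma extz_invalid (x : VIdx N → ℚ) (i j : ℤ) (h : ¬(1 ≤ i ∧ i < j ∧ j ≤ N)) :
    extz N x i j = 0 := dif_neg h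

lemma mkV_coords (v : VIdx N) (h : _) :
    mkV N (v.val.1.val : ℤ) (v.val.2.val : ℤ) h = v := by
  apply Subtype.ext
  apply Prod.ext <;> apply Fin.ext <;> simp [mkV]

lemma extz_apply (x : VIdx N → ℚ) (v : VIdx N) :
    extz N x (v.val.1.val : ℤ) (v.val.2.val : ℤ) = x v := by
  have h : 1 ≤ (v.val.1.val : ℤ) ∧ (v.val.1.val : ℤ) < (v.val.2.val : ℤ) ∧ (v.val.2.val : ℤ) ≤ N := by
    have := v.2; omega
  rw [extz_valid N x _ _ h, mkV_coords]

lemma Bfun_decomp (i j a b : ℕ) :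
    ((Bfun (i,j) (a,b) : ℤ) : ℚ) =
      (if ((a:ℤ) = i ∧ (b:ℤ) = j+1) then 1 else 0)
    + (if ((a:ℤ) = i+1 ∧ (b:ℤ) = j) then 1 else 0)
    + (if ((a:ℤ) = i-1 ∧ (b:ℤ) = j-1) then 1 else 0)
    - (if ((a:ℤ) = i ∧ (b:ℤ) = j-1) then 1 else 0)
    - (if ((a:ℤ) = i-1 ∧ (b:ℤ) = j) then 1 else 0)
    - (if ((a:ℤ) = i+1 ∧ (b:ℤ) = j+1) then 1 else 0) := by
  simp only [Bfun, Prod.mk.injEq]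
  split_ifs <;> (try norm_num) <;> omega

lemma sum_ind (x : VIdx N → ℚ) (c d : ℤ) :
    (∑ w : VIdx N, if ((w.val.1.val : ℤ) = c ∧ (w.val.2.val : ℤ) = d) then x w else 0)
      = extz N x c d := by
  by_cases h : 1 ≤ c ∧ c < d ∧ d ≤ N
  · rw [extz_valid N x c d h]
    rw [Finset.sum_eq_single (mkV N c d h)]
    · rw [if_pos]
      constructor <;> simp [mkV] <;> omega
    · intro w _ hw
      rw [if_neg]
      intro hc
      exact hw (by
        apply Subtype.ext; apply Prod.ext <;> apply Fin.ext <;> simp [mkV] <;> omega)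
    · intro hmem; exact absurd (Finset.mem_univ _) hmem
  · rw [extz_invalid N x c d h]
    apply Finset.sum_eq_zero
    intro w _
    rw [if_neg]
    intro hc
    have := w.2
    omega

lemma mulVec_formula (x : VIdx N → ℚ) (v : VIdx N) :
    (Bmat N).mulVecLin x v =
      extz N x (v.val.1.val) ((v.val.2.val : ℤ)+1) + extz N x ((v.val.1.val : ℤ)+1) (v.val.2.val)
      + extz N x ((v.val.1.val : ℤ)-1) ((v.val.2.val : ℤ)-1)
      - extz N x (v.val.1.val) ((v.val.2.val : ℤ)-1) - extz N x ((v.val.1.val : ℤ)-1) (v.val.2.val)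
      - extz N x ((v.val.1.val : ℤ)+1) ((v.val.2.val : ℤ)+1) := by
  set i := (v.val.1.val : ℤ)
  set j := (v.val.2.val : ℤ)
  rw [Matrix.mulVecLin_apply]
  have : (Bmat N).mulVec x v = ∑ w : VIdx N, Bmat N v w * x w := by
    simp [Matrix.mulVec, dotProduct]
  rw [this]
  have hrw : ∀ w : VIdx N, Bmat N v w * x w =
      (if ((w.val.1.val : ℤ) = i ∧ (w.val.2.val : ℤ) = j+1) then x w else 0)
    + (if ((w.val.1.val : ℤ) = i+1 ∧ (w.val.2.val : ℤ) = j) then x w else 0)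
    + (if ((w.val.1.val : ℤ) = i-1 ∧ (w.val.2.val : ℤ) = j-1) then x w else 0)
    - (if ((w.val.1.val : ℤ) = i ∧ (w.val.2.val : ℤ) = j-1) then x w else 0)
    - (if ((w.val.1.val : ℤ) = i-1 ∧ (w.val.2.val : ℤ) = j) then x w else 0)
    - (if ((w.val.1.val : ℤ) = i+1 ∧ (w.val.2.val : ℤ) = j+1) then x w else 0) := by
    intro w
    have : Bmat N v w = ((Bfun (v.val.1.val, v.val.2.val) (w.val.1.val, w.val.2.val) : ℤ) : ℚ) := rfl
    rw [this, Bfun_decomp]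
    split_ifs <;> ring
  simp only [hrw]
  simp only [Finset.sum_add_distrib, Finset.sum_sub_distrib, sum_ind]

section Kernel
variable {N : ℕ} {x : VIdx N → ℚ}

/-- `q j = α_{1,j}` (extended by zero). -/
def qf (N : ℕ) (x : VIdx N → ℚ) (j : ℤ) : ℚ := extz N x 1 j

/-- `W j = ∑_{t=1}^{j} q t`. -/
noncomputable def Wf (N : ℕ) (x : VIdx N → ℚ) (j : ℤ) : ℚ := ∑ t ∈ Finset.Icc (1:ℤ) j, qf N x t

/-- `g i j = A i j - A (i-1) (j-1)`. -/
def gf (N : ℕ) (x : VIdx N → ℚ) (i j : ℤ) : ℚ := extz N x i j - extz N x (i-1) (j-1)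

lemma W_step (j : ℤ) (hj : 1 ≤ j) : Wf N x j = Wf N x (j-1) + qf N x j := by
  have : Finset.Icc (1:ℤ) j = insert j (Finset.Icc 1 (j-1)) := by
    ext t; simp only [Finset.mem_Icc, Finset.mem_insert]; omega
  rw [Wf, this, Finset.sum_insert (by simp only [Finset.mem_Icc]; omega)]
  rw [Wf]; ring

lemma W_one : Wf N x 1 = 0 := by
  have : Finset.Icc (1:ℤ) 1 = {1} := by ext t; simp only [Finset.mem_Icc, Finset.mem_singleton]; omega
  rw [Wf, this, Finset.sum_singleton, qf, extz_invalid]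
  omega

lemma ker_eqn (hx : (Bmat N).mulVecLin x = 0) :
    ∀ i j : ℤ, 1 ≤ i → i < j → j ≤ N →
      extz N x i (j+1) + extz N x (i+1) j + extz N x (i-1) (j-1)
        = extz N x i (j-1) + extz N x (i-1) j + extz N x (i+1) (j+1) := by
  intro i j h1 h2 h3
  have h : 1 ≤ i ∧ i < j ∧ j ≤ N := ⟨h1, h2, h3⟩
  have := mulVec_formula N x (mkV N i j h)
  rw [hx] at this
  have hcoord1 : ((mkV N i j h).val.1.val : ℤ) = i := by simp [mkV] <;> omega
  have hcoord2 : ((mkV N i j h).val.2.val : ℤ) = j := by simp [mkV] <;> omega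
  rw [hcoord1, hcoord2] at this
  simp only [Pi.zero_apply] at this
  linarith [this]

/-- L1: the "vertical difference" of `g` is constant along a row. -/
lemma L1 (hx : (Bmat N).mulVecLin x = 0) :
    ∀ i j : ℤ, 1 ≤ i → i + 1 ≤ j → j ≤ N + 1 →
      gf N x (i+1) j - gf N x i j = - gf N x i (i+1) := by
  have key : ∀ t : ℕ, ∀ i : ℤ, 1 ≤ i → i + 1 + (t:ℤ) ≤ N + 1 →
      gf N x (i+1) (i+1+(t:ℤ)) - gf N x i (i+1+(t:ℤ)) = - gf N x i (i+1) := by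
    intro t
    induction t with
    | zero =>
      intro i hi _
      have : gf N x (i+1) (i+1) = 0 := by
        rw [gf, extz_invalid _ _ _ _ (by omega), extz_invalid _ _ _ _ (by omega)]; ring
      push_cast
      simpa [this] using by ring_nf; rw [this]; ring
    | succ t ih =>
      intro i hi hj
      have ihh := ih i hi (by push_cast at hj ⊢; omega)
      have hsq := ker_eqn hx i (i+1+(t:ℤ)) hi (by omega) (by push_cast at hj; omega)
      rw [gf, gf, gf] at ihh ⊢
      push_cast at ihh hsq ⊢
      ring_nf at ihh hsq ⊢
      linarith [ihh, hsq]
  intro i j hi hij hj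
  obtain ⟨t, ht⟩ : ∃ t : ℕ, j = i + 1 + t := ⟨(j - (i+1)).toNat, by omega⟩
  subst ht
  exact key t i hi hj

/-- L2: `g i j = q j - q i`. -/
lemma L2 (hx : (Bmat N).mulVecLin x = 0) :
    ∀ i j : ℤ, 1 ≤ i → i < j → j ≤ N + 1 → gf N x i j = qf N x j - qf N x i := by
  have key : ∀ t : ℕ, ∀ j : ℤ, 1 + (t:ℤ) < j → j ≤ N + 1 →
      gf N x (1+(t:ℤ)) j = qf N x j - qf N x (1+(t:ℤ)) := by
    intro t
    induction t with
    | zero =>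
      intro j h1 h2
      have hq1 : qf N x 1 = 0 := by rw [qf]; exact extz_invalid N x 1 1 (by omega)
      have h0 : extz N x ((1:ℤ)-1) (j-1) = 0 := extz_invalid N x _ _ (by omega)
      push_cast
      rw [gf, h0, hq1, qf]
    | succ t ih =>
      intro j h1 h2
      set i : ℤ := 1 + (t:ℤ) with hi
      have hL1 := L1 hx i j (by omega) (by push_cast at h1; omega) h2
      have hgij := ih j (by push_cast at h1; omega) h2
      have hgii := ih (i+1) (by omega) (by push_cast at h1 h2; omega)
      have : (1:ℤ) + ((t:ℤ)+1) = i + 1 := by rw [hi]; ring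
      push_cast
      rw [this]
      have goal : gf N x (i+1) j = gf N x i j - gf N x i (i+1) := by linarith [hL1]
      rw [goal, hgij, hgii]
      ring
  intro i j hi hij hj
  obtain ⟨t, ht⟩ : ∃ t : ℕ, i = 1 + (t:ℤ) := ⟨(i-1).toNat, by omega⟩
  subst ht
  exact key t j hij hj

/-- L3: the closed formula `A i j = W j - W i - W (j - i)` on the triangle. -/
lemma L3 (hx : (Bmat N).mulVecLin x = 0) :
    ∀ i j : ℤ, 1 ≤ i → i < j → j ≤ N →
      extz N x i j = Wf N x j - Wf N x i - Wf N x (j - i) := by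
  have key : ∀ t : ℕ, ∀ j : ℤ, 1 + (t:ℤ) < j → j ≤ N →
      extz N x (1+(t:ℤ)) j = Wf N x j - Wf N x (1+(t:ℤ)) - Wf N x (j - (1+(t:ℤ))) := by
    intro t
    induction t with
    | zero =>
      intro j h1 h2
      push_cast
      have hWq : Wf N x j = Wf N x (j-1) + qf N x j := W_step j (by omega)
      rw [hWq, W_one, qf]
      ring
    | succ t ih =>
      intro j h1 h2
      set i : ℤ := 1 + (t:ℤ) with hi
      push_cast at h1 ⊢
      have e : (1:ℤ) + ((t:ℤ)+1) = i + 1 := by rw [hi]; ring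
      rw [e]
      have hprev := ih (j-1) (by omega) (by omega)
      have hg := L2 hx (i+1) j (by omega) (by omega) (by omega)
      have hgdef : gf N x (i+1) j = extz N x (i+1) j - extz N x i (j-1) := by
        rw [gf]; ring_nf
      have hWj : Wf N x j = Wf N x (j-1) + qf N x j := W_step j (by omega)
      have hWi : Wf N x (i+1) = Wf N x i + qf N x (i+1) := by
        have := W_step (N:=N) (x:=x) (i+1) (by omega)
        simpa using this
      have e2 : j - 1 - i = j - (i+1) := by ring
      rw [e2] at hprev
      have : extz N x (i+1) j = extz N x i (j-1) + qf N x j - qf N x (i+1) := by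
        have h' := hg
        rw [hgdef] at h'
        linarith [h']
      rw [this, hprev, hWj, hWi]
      ring
  intro i j hi hij hj
  obtain ⟨t, ht⟩ : ∃ t : ℕ, i = 1 + (t:ℤ) := ⟨(i-1).toNat, by omega⟩
  subst ht
  exact key t j hij hj

/-- L5: the pair-sum property of `W`. -/
lemma L5 (hN : 2 ≤ N) (hx : (Bmat N).mulVecLin x = 0) :
    ∀ k : ℤ, 1 ≤ k → k ≤ N → Wf N x k + Wf N x (N + 1 - k) = Wf N x N := by
  intro k h1 h2
  rcases eq_or_lt_of_le h1 with h | h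
  · rw [← h, W_one]
    simp
  · -- k ≥ 2
    have hg := L2 hx k ((N:ℤ)+1) (by omega) (by omega) (by omega)
    have hq : qf N x ((N:ℤ)+1) = 0 := by rw [qf, extz_invalid]; omega
    have hgdef : gf N x k ((N:ℤ)+1) = - extz N x (k-1) ((N:ℤ)) := by
      rw [gf, extz_invalid _ _ _ _ (by omega)]
      norm_num
    have hAz : extz N x (k-1) (N:ℤ) = qf N x k := by
      rw [hgdef] at hg
      rw [hq] at hg
      linarith [hg]
    have hform := L3 hx (k-1) (N:ℤ) (by omega) (by omega) (by omega)
    rw [hAz] at hform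
    have hqk : qf N x k = Wf N x k - Wf N x (k-1) := by
      have := W_step (N:=N) (x:=x) k (by omega); linarith [this]
    have e : (N:ℤ) - (k-1) = (N:ℤ) + 1 - k := by ring
    rw [e] at hform
    linarith [hform, hqk]

end Kernel

section Param
variable (N : ℕ)

def cz (c : Fin (N/2) → ℚ) (t : ℤ) : ℚ :=
  if h : 1 ≤ t ∧ t ≤ (N/2 : ℕ) then c ⟨(t-1).toNat, by omega⟩ else 0

def Yf (c : Fin (N/2) → ℚ) (k : ℤ) : ℚ := cz N c ((N:ℤ)+1-k) - cz N c k

lemma Y_anti (c : Fin (N/2) → ℚ) (k : ℤ) : Yf N c ((N:ℤ)+1-k) = - Yf N c k := by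
  rw [Yf, Yf, show (N:ℤ)+1-((N:ℤ)+1-k) = k by ring]
  ring

def theta (c : Fin (N/2) → ℚ) : VIdx N → ℚ := fun v =>
  Yf N c (v.val.2.val) - Yf N c (v.val.1.val)
    - Yf N c ((v.val.2.val : ℤ) - (v.val.1.val : ℤ)) - Yf N c N

lemma theta_mk (c : Fin (N/2) → ℚ) (a b : ℤ) (h : 1 ≤ a ∧ a < b ∧ b ≤ N) :
    theta N c (mkV N a b h) = Yf N c b - Yf N c a - Yf N c (b-a) - Yf N c N := by
  have e1 : (((mkV N a b h).val.1.val : ℕ) : ℤ) = a := by simp [mkV] <;> omega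
  have e2 : (((mkV N a b h).val.2.val : ℕ) : ℤ) = b := by simp [mkV] <;> omega
  simp only [theta, e1, e2]

lemma ext_theta1 (c : Fin (N/2) → ℚ) (a b : ℤ) (h : 1 ≤ a ∧ a < b ∧ b ≤ N) :
    extz N (theta N c) a b = Yf N c b - Yf N c a - Yf N c (b-a) - Yf N c N := by
  rw [extz_valid N _ a b h, theta_mk]

lemma theta_ker (c : Fin (N/2) → ℚ) : (Bmat N).mulVecLin (theta N c) = 0 := by
  funext v
  rw [mulVec_formula]
  obtain ⟨hi1, hij, hjN⟩ : 1 ≤ ((v.val.1.val : ℕ) : ℤ) ∧ ((v.val.1.val : ℕ) : ℤ) < ((v.val.2.val : ℕ) : ℤ) ∧ ((v.val.2.val : ℕ) : ℤ) ≤ N := by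
    have := v.2; omega
  set i := ((v.val.1.val : ℕ) : ℤ) with hidef
  set j := ((v.val.2.val : ℕ) : ℤ) with hjdef
  clear_value i j
  simp only [Pi.zero_apply]
  rcases eq_or_lt_of_le hjN with hj | hj <;> rcases eq_or_lt_of_le hi1 with hi | hi <;>
    rcases (by omega : i + 1 = j ∨ i + 1 < j) with hd | hd
  -- j = N, i = 1, j = i+1  (N = 2)
  · subst hj; subst hi
    rw [extz_invalid N _ _ _ (by omega), extz_invalid N _ _ _ (by omega),
        extz_invalid N _ _ _ (by omega), extz_invalid N _ _ _ (by omega),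
        extz_invalid N _ _ _ (by omega), extz_invalid N _ _ _ (by omega)]
    ring
  -- j = N, i = 1, i+1 < j
  · subst hj; subst hi
    rw [extz_invalid N _ _ _ (by omega), ext_theta1 N c _ _ (by omega),
        extz_invalid N _ _ _ (by omega), ext_theta1 N c _ _ (by omega),
        extz_invalid N _ _ _ (by omega), extz_invalid N _ _ _ (by omega)]
    have A2 := Y_anti N c 1
    have A3 := Y_anti N c 2
    ring_nf at A2 A3 ⊢
    linarith
  -- j = N, 1 < i, j = i+1
  · subst hj
    obtain rfl : i = (N:ℤ) - 1 := by omega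
    rw [extz_invalid N _ _ _ (by omega), extz_invalid N _ _ _ (by omega),
        ext_theta1 N c _ _ (by omega), extz_invalid N _ _ _ (by omega),
        ext_theta1 N c _ _ (by omega), extz_invalid N _ _ _ (by omega)]
    have A2 := Y_anti N c 1
    have A3 := Y_anti N c 2
    ring_nf at A2 A3 ⊢
    linarith
  -- j = N, 1 < i, i+1 < j
  · subst hj
    rw [extz_invalid N _ _ _ (by omega), ext_theta1 N c _ _ (by omega),
        ext_theta1 N c _ _ (by omega), ext_theta1 N c _ _ (by omega),
        ext_theta1 N c _ _ (by omega), extz_invalid N _ _ _ (by omega)]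
    have A0 := Y_anti N c i
    have A1 := Y_anti N c (i+1)
    ring_nf at A0 A1 ⊢
    linarith
  -- j < N, i = 1, j = i+1
  · subst hi; subst hd
    rw [ext_theta1 N c _ _ (by omega), extz_invalid N _ _ _ (by omega),
        extz_invalid N _ _ _ (by omega), extz_invalid N _ _ _ (by omega),
        extz_invalid N _ _ _ (by omega), ext_theta1 N c _ _ (by omega)]
    ring_nf
  -- j < N, i = 1, i+1 < j
  · subst hi
    rw [ext_theta1 N c _ _ (by omega), ext_theta1 N c _ _ (by omega),
        extz_invalid N _ _ _ (by omega), ext_theta1 N c _ _ (by omega),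
        extz_invalid N _ _ _ (by omega), ext_theta1 N c _ _ (by omega)]
    ring_nf
  -- j < N, 1 < i, j = i+1
  · subst hd
    rw [ext_theta1 N c _ _ (by omega), extz_invalid N _ _ _ (by omega),
        ext_theta1 N c _ _ (by omega), extz_invalid N _ _ _ (by omega),
        ext_theta1 N c _ _ (by omega), ext_theta1 N c _ _ (by omega)]
    ring_nf
  -- interior
  · rw [ext_theta1 N c _ _ (by omega), ext_theta1 N c _ _ (by omega),
        ext_theta1 N c _ _ (by omega), ext_theta1 N c _ _ (by omega),
        ext_theta1 N c _ _ (by omega), ext_theta1 N c _ _ (by omega)]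
    ring_nf


lemma cz_pos (c : Fin (N/2) → ℚ) (t : ℤ) (h1 : 1 ≤ t) (h2 : t ≤ (N/2 : ℕ)) :
    cz N c t = c ⟨(t-1).toNat, by omega⟩ := dif_pos ⟨h1, h2⟩

lemma cz_zero (c : Fin (N/2) → ℚ) (t : ℤ) (h : ¬(1 ≤ t ∧ t ≤ (N/2 : ℕ))) :
    cz N c t = 0 := dif_neg h

lemma Y_one (c : Fin (N/2) → ℚ) : Yf N c 1 = - Yf N c (N:ℤ) := by
  have := Y_anti N c (N:ℤ)
  rw [show (N:ℤ)+1-(N:ℤ) = 1 by ring] at this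
  rw [this]

lemma cz_add (c d : Fin (N/2) → ℚ) (t : ℤ) : cz N (c + d) t = cz N c t + cz N d t := by
  unfold cz; split_ifs <;> simp

lemma cz_smul (r : ℚ) (c : Fin (N/2) → ℚ) (t : ℤ) : cz N (r • c) t = r * cz N c t := by
  unfold cz; split_ifs <;> simp

lemma Y_add (c d : Fin (N/2) → ℚ) (k : ℤ) : Yf N (c + d) k = Yf N c k + Yf N d k := by
  simp only [Yf, cz_add]; ring

lemma Y_smul (r : ℚ) (c : Fin (N/2) → ℚ) (k : ℤ) : Yf N (r • c) k = r * Yf N c k := by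
  simp only [Yf, cz_smul]; ring

lemma theta_add (c d : Fin (N/2) → ℚ) : theta N (c + d) = theta N c + theta N d := by
  funext v; simp only [theta, Y_add, Pi.add_apply]; ring

lemma theta_smul (r : ℚ) (c : Fin (N/2) → ℚ) : theta N (r • c) = r • theta N c := by
  funext v; simp only [theta, Y_smul, Pi.smul_apply, smul_eq_mul]; ring

lemma theta_inj (hN : 2 ≤ N) (c : Fin (N/2) → ℚ) (h : theta N c = 0) : c = 0 := by
  have hm1 : 1 ≤ N/2 := by omega
  have step : ∀ j : ℤ, 2 ≤ j → j ≤ N → Yf N c j = Yf N c (j-1) := by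
    intro j h2 hj
    have hv : 1 ≤ (1:ℤ) ∧ (1:ℤ) < j ∧ j ≤ N := ⟨le_refl _, by omega, hj⟩
    have := congrFun h (mkV N 1 j hv)
    rw [theta_mk] at this
    simp only [Pi.zero_apply] at this
    have h1 := Y_one N c
    linarith [this]
  have const : ∀ t : ℕ, 1 + (t:ℤ) ≤ N → Yf N c (1 + (t:ℤ)) = Yf N c 1 := by
    intro t
    induction t with
    | zero => intro _; norm_num
    | succ t ih =>
      intro ht
      have := step (1 + ((t:ℤ)+1)) (by omega) (by push_cast at ht; omega)
      push_cast at ht ⊢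
      rw [show (1:ℤ) + ((t:ℤ)+1) - 1 = 1 + (t:ℤ) by ring] at this
      rw [this, ih (by omega)]
  have Yconst : ∀ k : ℤ, 1 ≤ k → k ≤ N → Yf N c k = Yf N c 1 := by
    intro k h1 h2
    obtain ⟨t, rfl⟩ : ∃ t : ℕ, k = 1 + (t:ℤ) := ⟨(k-1).toNat, by omega⟩
    exact const t h2
  have hYlow : ∀ k : Fin (N/2), Yf N c ((k:ℤ)+1) = - c k := by
    intro k
    have hfin : (⟨((((k:ℤ)+1))-1).toNat, by have := k.2; omega⟩ : Fin (N/2)) = k := by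
      apply Fin.ext; simp
    rw [Yf, cz_pos N c ((k:ℤ)+1) (by omega) (by have := k.2; omega),
        cz_zero N c ((N:ℤ)+1-((k:ℤ)+1)) (by have := k.2; omega), hfin]
    ring
  have hY1 : Yf N c 1 = - c ⟨0, by omega⟩ := by
    have := hYlow ⟨0, by omega⟩
    norm_num at this ⊢
    exact this
  have hall' : ∀ k : Fin (N/2), c k = c ⟨0, by omega⟩ := by
    intro k
    have h1 := Yconst ((k:ℤ)+1) (by omega) (by have := k.2; omega)
    rw [hYlow k, hY1] at h1
    linarith [h1]
  have hc0 : c ⟨0, by omega⟩ = 0 := by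
    have hmid := Yconst ((N/2 : ℕ) + 1) (by omega) (by omega)
    rw [hY1] at hmid
    by_cases hpar : N % 2 = 0
    · -- N even : N + 1 - (N/2 + 1) = N/2
      have hNm : (N:ℤ)+1-(((N/2:ℕ):ℤ)+1) = ((N/2:ℕ) : ℤ) := by omega
      have hYm : Yf N c (((N/2:ℕ):ℤ) + 1) = c ⟨((((N/2:ℕ):ℤ))-1).toNat, by omega⟩ := by
        rw [Yf, cz_zero N c (((N/2:ℕ):ℤ)+1) (by omega), hNm,
            cz_pos N c (((N/2:ℕ)):ℤ) (by omega) (le_refl _)]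
        ring
      rw [hYm] at hmid
      have h2 := hall' ⟨((((N/2:ℕ):ℤ))-1).toNat, by omega⟩
      rw [h2] at hmid
      linarith [hmid]
    · -- N odd : N + 1 - (N/2 + 1) = N/2 + 1 > N/2
      have hYm : Yf N c (((N/2:ℕ):ℤ) + 1) = 0 := by
        rw [Yf, cz_zero N c (((N/2:ℕ):ℤ)+1) (by omega),
            cz_zero N c ((N:ℤ)+1-(((N/2:ℕ):ℤ)+1)) (by omega)]
        ring
      rw [hYm] at hmid
      linarith [hmid]
  funext k
  rw [hall' k, hc0]
  rfl

lemma theta_surj {x : VIdx N → ℚ} (hN : 2 ≤ N) (hx : (Bmat N).mulVecLin x = 0) :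
    theta N (fun t : Fin (N/2) => Wf N x N / 2 - Wf N x ((t:ℤ)+1)) = x := by
  set c : Fin (N/2) → ℚ := fun t => Wf N x N / 2 - Wf N x ((t:ℤ)+1) with hc
  have hczpos : ∀ t : ℤ, 1 ≤ t → t ≤ (N/2 : ℕ) → cz N c t = Wf N x N / 2 - Wf N x t := by
    intro t h1 h2
    rw [cz_pos N c t h1 h2, hc]
    simp only
    congr 2
    omega
  have hYN : Yf N c (N:ℤ) = Wf N x N / 2 := by
    rw [Yf, show (N:ℤ)+1-(N:ℤ) = 1 by ring, hczpos 1 (le_refl _) (by omega),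
        cz_zero N c (N:ℤ) (by omega), W_one]
    ring
  have key : ∀ k : ℤ, 1 ≤ k → k ≤ N → Yf N c (N:ℤ) + Yf N c k = Wf N x k := by
    intro k h1 h2
    rw [hYN]
    by_cases hlow : k ≤ (N/2 : ℕ)
    · rw [Yf, hczpos k h1 hlow, cz_zero N c ((N:ℤ)+1-k) (by omega)]
      ring
    · by_cases hhigh : (N:ℤ)+1-k ≤ (N/2 : ℕ)
      · rw [Yf, hczpos ((N:ℤ)+1-k) (by omega) hhigh, cz_zero N c k (by omega)]
        have := L5 hN hx k h1 h2
        linarith [this]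
      · -- middle: 2k = N+1
        have hmid : 2*k = (N:ℤ)+1 := by omega
        rw [Yf, cz_zero N c ((N:ℤ)+1-k) (by omega), cz_zero N c k (by omega)]
        have := L5 hN hx k h1 h2
        rw [show (N:ℤ)+1-k = k by omega] at this
        linarith [this]
  funext v
  obtain ⟨hi1, hij, hjN⟩ : 1 ≤ ((v.val.1.val : ℕ) : ℤ) ∧ ((v.val.1.val : ℕ) : ℤ) < ((v.val.2.val : ℕ) : ℤ) ∧ ((v.val.2.val : ℕ) : ℤ) ≤ N := by
    have := v.2; omega
  have hform := L3 hx ((v.val.1.val : ℕ) : ℤ) ((v.val.2.val : ℕ) : ℤ) hi1 hij hjN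
  rw [extz_apply] at hform
  have k1 := key ((v.val.1.val : ℕ) : ℤ) hi1 (by omega)
  have k2 := key ((v.val.2.val : ℕ) : ℤ) (by omega) hjN
  have k3 := key (((v.val.2.val : ℕ) : ℤ) - ((v.val.1.val : ℕ) : ℤ)) (by omega) (by omega)
  simp only [theta]
  linarith [hform, k1, k2, k3]

end Param
end QT

/-- The kernel of the incidence matrix `B` of `Q_N` (equivalently, the center of the
quantum torus `T_N`) has dimension `N/2` for even `N` and `(N-1)/2` for odd `N`. -/
theorem finrank_ker_B (N : ℕ) (hN : 2 ≤ N) :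
    Module.finrank ℚ (LinearMap.ker (Bmat N).mulVecLin) =
      if N % 2 = 0 then N / 2 else (N - 1) / 2 := by
  classical
  -- the linear parametrization of the kernel
  let Θ : (Fin (N/2) → ℚ) →ₗ[ℚ] (VIdx N → ℚ) :=
    { toFun := QT.theta N
      map_add' := QT.theta_add N
      map_smul' := QT.theta_smul N }
  have hker : ∀ c, Θ c ∈ LinearMap.ker (Bmat N).mulVecLin := by
    intro c
    exact LinearMap.mem_ker.mpr (QT.theta_ker N c)
  let E : (Fin (N/2) → ℚ) →ₗ[ℚ] (LinearMap.ker (Bmat N).mulVecLin) :=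
    Θ.codRestrict _ hker
  have hbij : Function.Bijective E := by
    constructor
    · intro c d hcd
      have hval := congrArg Subtype.val hcd
      simp only [E, Θ, LinearMap.codRestrict_apply, LinearMap.coe_mk, AddHom.coe_mk] at hval
      have hsub : c - d = c + (-1 : ℚ) • d := by
        funext t; simp [sub_eq_add_neg]
      have hz : QT.theta N (c - d) = 0 := by
        rw [hsub, QT.theta_add, QT.theta_smul, hval]
        funext v; simp
      have h0 := QT.theta_inj N hN (c - d) hz
      exact sub_eq_zero.mp h0
    · rintro ⟨x, hx⟩
      refine ⟨fun t : Fin (N/2) => QT.Wf N x N / 2 - QT.Wf N x ((t:ℤ)+1), ?_⟩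
      apply Subtype.ext
      simp only [E, LinearMap.codRestrict_apply]
      exact QT.theta_surj N hN (LinearMap.mem_ker.mp hx)
  have := (LinearEquiv.ofBijective E hbij).finrank_eq
  rw [← this]
  rw [Module.finrank_fintype_fun_eq_card]
  simp only [Fintype.card_fin]
  split_ifs <;> omega
end
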